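/- arXiv:2305.04698 — 2 statements merged into one kernel-verified Lean document; each statement's English description precedes it below -/
import Mathlib

section
/- Let p be a prime, m ≥ 1 and 1 ≤ s ≤ m integers, λ a positive integer with p ∣ λ, and π a permutation of {s, s+1, …, m}. Fix g_1, …, g_m, g ∈ ℤ_λ and an arbitrary function h : ℤ_p^{s−1} → ℤ_λ (with h = 0 when s = 1). Define f : ℤ_p^m → ℤ_λ by f(v_1, …, v_m) = (λ/p)·Σ_{i=s}^{m−1} v_{π(i)} v_{π(i+1)} + Σ_{i=1}^{m} g_i v_i + g + h(v_1, …, v_{s−1}) (mod λ), and for each γ ∈ ℤ_p define a^γ = f + (λ/p)·v_{π(s)}·γ (mod λ). Then for every integer τ with 0 < τ < p^m and p^{s−1} ∣ τ, Σ_{γ=0}^{p−1} ρ(ψ(a^γ))(τ) = 0; that is, the set {ψ(a^γ) : γ ∈ ℤ_p} is a (p, p^m, p^{s−1})-multiple shift complementary set. -/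
open Finset

/-- `eZMod q x = ω_q^x` where `ω_q = exp(2π√-1/q)`. -/
noncomputable def eZMod (q : ℕ) (x : ZMod q) : ℂ :=
  Complex.exp (2 * (Real.pi : ℂ) * Complex.I * (x.val : ℂ) / (q : ℂ))

/-- Aperiodic autocorrelation of a sequence of length `L` at shift `τ`. -/
noncomputable def aacf (L : ℕ) (a : ℕ → ℂ) (τ : ℕ) : ℂ :=
  ∑ i ∈ Finset.range (L - τ), a i * (starRingEnd ℂ) (a (i + τ))

/-- `dig p i k` is the `k`-th base-`p` digit (1-indexed) of `i`, viewed in `ℤ_p`. -/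
def dig (p i : ℕ) (k : ℕ) : ZMod p :=
  (((i / p ^ (k - 1)) % p : ℕ) : ZMod p)




lemma exp_nat_period (lam : ℕ) (hl : 0 < lam) (r q : ℕ) :
    Complex.exp (2 * (Real.pi:ℂ) * Complex.I * ((r + lam * q : ℕ) : ℂ) / lam)
      = Complex.exp (2 * (Real.pi:ℂ) * Complex.I * (r:ℂ) / lam) := by
  have hlam : (lam : ℂ) ≠ 0 := Nat.cast_ne_zero.mpr hl.ne'
  have h : (2 * (Real.pi:ℂ) * Complex.I * ((r + lam * q : ℕ) : ℂ) / lam)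
      = 2 * (Real.pi:ℂ) * Complex.I * (r:ℂ) / lam + (q:ℤ) * (2 * (Real.pi:ℂ) * Complex.I) := by
    push_cast
    field_simp
  rw [h, Complex.exp_add, Complex.exp_int_mul_two_pi_mul_I, mul_one]

lemma eZMod_natCast (lam : ℕ) (hl : 0 < lam) (n : ℕ) :
    eZMod lam (n : ZMod lam) = Complex.exp (2 * (Real.pi:ℂ) * Complex.I * (n:ℂ) / lam) := by
  unfold eZMod
  rw [ZMod.val_natCast]
  conv_rhs => rw [← Nat.mod_add_div n lam]
  rw [exp_nat_period lam hl]

lemma natCast_val_eq (lam : ℕ) (hl : 0 < lam) (x : ZMod lam) : ((x.val : ℕ) : ZMod lam) = x := by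
  haveI : NeZero lam := ⟨hl.ne'⟩
  simp [ZMod.natCast_val, ZMod.cast_id]

lemma eZMod_add (lam : ℕ) (hl : 0 < lam) (x y : ZMod lam) :
    eZMod lam (x + y) = eZMod lam x * eZMod lam y := by
  have hx := natCast_val_eq lam hl x
  have hy := natCast_val_eq lam hl y
  have h1 : x + y = ((x.val + y.val : ℕ) : ZMod lam) := by push_cast [hx, hy]; ring
  rw [h1, eZMod_natCast lam hl]
  nth_rewrite 2 [show x = ((x.val : ℕ) : ZMod lam) from hx.symm]
  nth_rewrite 2 [show y = ((y.val : ℕ) : ZMod lam) from hy.symm]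
  rw [eZMod_natCast lam hl, eZMod_natCast lam hl, ← Complex.exp_add]
  congr 1
  push_cast
  ring

lemma eZMod_zero (lam : ℕ) (hl : 0 < lam) : eZMod lam 0 = 1 := by
  haveI : NeZero lam := ⟨hl.ne'⟩
  unfold eZMod
  simp

lemma eZMod_ne_zero (lam : ℕ) (x : ZMod lam) : eZMod lam x ≠ 0 := Complex.exp_ne_zero _

lemma eZMod_nsmul (lam : ℕ) (hl : 0 < lam) (n : ℕ) (x : ZMod lam) :
    eZMod lam ((n : ZMod lam) * x) = (eZMod lam x) ^ n := by
  induction n with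
  | zero => simpa using eZMod_zero lam hl
  | succ k ih =>
      have : ((k+1 : ℕ) : ZMod lam) * x = (k : ZMod lam) * x + x := by push_cast; ring
      rw [this, eZMod_add lam hl, ih, pow_succ]

lemma eZMod_eq_one_iff (lam : ℕ) (hl : 0 < lam) (x : ZMod lam) :
    eZMod lam x = 1 ↔ x = 0 := by
  haveI : NeZero lam := ⟨hl.ne'⟩
  constructor
  · intro hx
    unfold eZMod at hx
    rw [Complex.exp_eq_one_iff] at hx
    obtain ⟨n, hn⟩ := hx
    have hlam : (lam : ℂ) ≠ 0 := Nat.cast_ne_zero.mpr hl.ne'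
    have hpi : (2 * (Real.pi:ℂ) * Complex.I) ≠ 0 := by
      simp [Real.pi_ne_zero, Complex.I_ne_zero]
    have h2 : (x.val : ℂ) = (n : ℂ) * lam := by
      have e1 : (2 * (Real.pi:ℂ) * Complex.I) * ((x.val:ℂ)/lam) = (2 * (Real.pi:ℂ) * Complex.I) * n := by
        linear_combination hn
      have e2 := mul_left_cancel₀ hpi e1
      rw [div_eq_iff hlam] at e2
      exact e2
    have h3 : (x.val : ℤ) = n * lam := by exact_mod_cast h2
    have h4 : x.val < lam := ZMod.val_lt x
    have h5 : x.val = 0 := by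
      rcases lt_trichotomy n 0 with h | h | h
      · nlinarith [h3, Int.ofNat_nonneg x.val, (by exact_mod_cast hl : (0:ℤ) < lam)]
      · subst h; omega
      · nlinarith [h3, (by exact_mod_cast h4 : (x.val : ℤ) < lam), (by exact_mod_cast hl : (0:ℤ) < lam)]
    exact (ZMod.val_eq_zero x).mp h5
  · rintro rfl; exact eZMod_zero lam hl

lemma eZMod_abs_one (lam : ℕ) (hl : 0 < lam) (x : ZMod lam) :
    ‖eZMod lam x‖ = 1 := by
  unfold eZMod
  have h : (2 * (Real.pi:ℂ) * Complex.I * (x.val : ℂ) / lam)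
      = ((2 * Real.pi * x.val / lam : ℝ) : ℂ) * Complex.I := by push_cast; ring
  rw [h, Complex.norm_exp_ofReal_mul_I]

lemma eZMod_conj (lam : ℕ) (hl : 0 < lam) (x : ZMod lam) :
    (starRingEnd ℂ) (eZMod lam x) = eZMod lam (-x) := by
  have h1 : eZMod lam (-x) * eZMod lam x = 1 := by
    rw [← eZMod_add lam hl, neg_add_cancel, eZMod_zero lam hl]
  have h2 : (starRingEnd ℂ) (eZMod lam x) * eZMod lam x = 1 := by
    rw [mul_comm, Complex.mul_conj]
    norm_cast
    rw [show Complex.normSq (eZMod lam x) = (‖eZMod lam x‖)^2 by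
      rw [Complex.sq_norm], eZMod_abs_one lam hl]
    norm_num
  have := h2.trans h1.symm
  exact mul_right_cancel₀ (eZMod_ne_zero lam x) this

lemma sum_eZMod_geom (p lam : ℕ) (hl : 0 < lam) (A K : ZMod lam)
    (hK : K ≠ 0) (hpK : (p : ZMod lam) * K = 0) :
    ∑ c ∈ range p, eZMod lam (A + (c : ZMod lam) * K) = 0 := by
  have hz : eZMod lam K ≠ 1 := fun hone => hK ((eZMod_eq_one_iff lam hl K).mp hone)
  have : ∀ c : ℕ, eZMod lam (A + (c : ZMod lam) * K) = eZMod lam A * (eZMod lam K) ^ c := by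
    intro c
    rw [eZMod_add lam hl, eZMod_nsmul lam hl]
  simp_rw [this]
  rw [← Finset.mul_sum, geom_sum_eq hz]
  have hzp : eZMod lam K ^ p = 1 := by
    rw [← eZMod_nsmul lam hl, hpK, eZMod_zero lam hl]
  rw [hzp]
  simp

/-- 0-indexed base-`p` digit. -/
def d0 (p n k : ℕ) : ℕ := n / p ^ k % p

/-- Set the `k`-th (0-indexed) digit of `n` to `c`. -/
def setd (p n k c : ℕ) : ℕ := n % p ^ k + c * p ^ k + n / p ^ (k+1) * p ^ (k+1)

lemma d0_lt (p n k : ℕ) (hp : 0 < p) : d0 p n k < p := Nat.mod_lt _ hp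

lemma setd_self (p n k : ℕ) : setd p n k (d0 p n k) = n := by
  have h3 : n / p ^ k / p = n / p ^ (k+1) := by rw [Nat.div_div_eq_div_mul, ← pow_succ]
  have h1 := Nat.div_add_mod n (p ^ k)
  have h2 := Nat.div_add_mod (n / p ^ k) p
  rw [h3] at h2
  unfold setd d0
  calc n % p ^ k + n / p ^ k % p * p ^ k + n / p ^ (k+1) * p ^ (k+1)
      = p ^ k * (p * (n / p ^ (k+1)) + n / p ^ k % p) + n % p ^ k := by rw [pow_succ]; ring
    _ = p ^ k * (n / p ^ k) + n % p ^ k := by rw [h2]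
    _ = n := h1

lemma setd_add (p n k c : ℕ) : setd p n k c + d0 p n k * p ^ k = n + c * p ^ k := by
  conv_rhs => rw [← setd_self p n k]
  unfold setd
  ring

/-- digits below `k` are unchanged by adding a multiple of `p^(k+1)`. -/
lemma d0_add_dvd (p x y q : ℕ) (hp : 0 < p) (h : p ^ (q+1) ∣ y) :
    d0 p (x + y) q = d0 p x q := by
  obtain ⟨w, rfl⟩ := h
  unfold d0
  have : p ^ (q+1) * w = p * w * p ^ q := by rw [pow_succ]; ring
  rw [this, Nat.add_mul_div_right _ _ (pow_pos hp q), Nat.add_mul_mod_self_left]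

lemma d0_setd_lt (p n k c q : ℕ) (hp : 0 < p) (hq : q < k) :
    d0 p (setd p n k c) q = d0 p n q := by
  have hd1 : p ^ (q+1) ∣ c * p ^ k + n / p ^ (k+1) * p ^ (k+1) := by
    have h1 : p ^ (q+1) ∣ p ^ k := pow_dvd_pow p hq
    have h2 : p ^ (q+1) ∣ p ^ (k+1) := pow_dvd_pow p (by omega)
    exact Nat.dvd_add (Dvd.dvd.mul_left h1 c) (Dvd.dvd.mul_left h2 _)
  have hd2 : p ^ (q+1) ∣ p ^ k * (n / p ^ k) := Dvd.dvd.mul_right (pow_dvd_pow p hq) _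
  have e1 : setd p n k c = n % p ^ k + (c * p ^ k + n / p ^ (k+1) * p ^ (k+1)) := by
    unfold setd; ring
  rw [e1, d0_add_dvd p _ _ q hp hd1]
  conv_rhs => rw [show n = n % p ^ k + p ^ k * (n / p ^ k) by
    rw [Nat.mod_add_div]]
  rw [d0_add_dvd p _ _ q hp hd2]

lemma d0_setd_self (p n k c : ℕ) (hp : 0 < p) (hc : c < p) :
    d0 p (setd p n k c) k = c := by
  unfold setd d0
  have e1 : n % p ^ k + c * p ^ k + n / p ^ (k+1) * p ^ (k+1)
      = n % p ^ k + (c + n / p ^ (k+1) * p) * p ^ k := by rw [pow_succ]; ring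
  rw [e1, Nat.add_mul_div_right _ _ (pow_pos hp k),
    Nat.div_eq_of_lt (Nat.mod_lt n (pow_pos hp k)), zero_add, Nat.add_mul_mod_self_right,
    Nat.mod_eq_of_lt hc]

lemma d0_setd_gt (p n k c q : ℕ) (hp : 0 < p) (hc : c < p) (hq : k < q) :
    d0 p (setd p n k c) q = d0 p n q := by
  have key : ∀ C, C < p → ∀ M, d0 p (n % p ^ k + C * p ^ k + M * p ^ (k+1)) q = d0 p (M * p ^ (k+1)) q := by
    intro C hC M
    have hx : n % p ^ k + C * p ^ k < p ^ (k+1) := by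
      have h1 : n % p ^ k < p ^ k := Nat.mod_lt n (pow_pos hp k)
      have : p ^ (k+1) = p * p ^ k := by rw [pow_succ]; ring
      rw [this]
      nlinarith [pow_pos hp k]
    unfold d0
    have e1 : p ^ q = p ^ (k+1) * p ^ (q - (k+1)) := by
      rw [← pow_add]; congr 1; omega
    rw [e1, ← Nat.div_div_eq_div_mul, ← Nat.div_div_eq_div_mul,
      Nat.add_mul_div_right _ _ (pow_pos hp (k+1)),
      Nat.div_eq_of_lt hx, zero_add, Nat.mul_div_cancel _ (pow_pos hp (k+1))]
  have e2 : setd p n k c = n % p ^ k + c * p ^ k + n / p ^ (k+1) * p ^ (k+1) := rfl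
  rw [e2, key c hc]
  conv_rhs => rw [show n = n % p ^ k + d0 p n k * p ^ k + n / p ^ (k+1) * p ^ (k+1) by
    conv_lhs => rw [← setd_self p n k]
    rfl]
  rw [key (d0 p n k) (d0_lt p n k hp)]

lemma setd_lt (p n k c m : ℕ) (hp : 0 < p) (hn : n < p ^ m) (hk : k < m) (hc : c < p) :
    setd p n k c < p ^ m := by
  have hx : n % p ^ k + c * p ^ k < p ^ (k+1) := by
    have h1 : n % p ^ k < p ^ k := Nat.mod_lt n (pow_pos hp k)
    have : p ^ (k+1) = p * p ^ k := by rw [pow_succ]; ring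
    rw [this]
    nlinarith [pow_pos hp k]
  have hdiv : n / p ^ (k+1) < p ^ (m - (k+1)) := by
    rw [Nat.div_lt_iff_lt_mul (pow_pos hp (k+1)), ← pow_add]
    have : m - (k+1) + (k+1) = m := by omega
    rw [this]; exact hn
  calc setd p n k c < p ^ (k+1) + n / p ^ (k+1) * p ^ (k+1) := by
        unfold setd; omega
    _ = (n / p ^ (k+1) + 1) * p ^ (k+1) := by ring
    _ ≤ p ^ (m - (k+1)) * p ^ (k+1) := Nat.mul_le_mul_right _ (by omega)
    _ = p ^ m := by rw [← pow_add]; congr 1; omega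

lemma d0_high (p n m q : ℕ) (hp : 0 < p) (hn : n < p ^ m) (hq : m ≤ q) : d0 p n q = 0 := by
  unfold d0
  rw [Nat.div_eq_of_lt (lt_of_lt_of_le hn (Nat.pow_le_pow_right hp hq))]
  exact Nat.zero_mod p

lemma digits_inj (p : ℕ) (hp : 0 < p) :
    ∀ m i j, i < p ^ m → j < p ^ m → (∀ q, q < m → d0 p i q = d0 p j q) → i = j := by
  intro m
  induction m with
  | zero => intro i j hi hj _; simp at hi hj; omega
  | succ m ih =>
      intro i j hi hj hd
      have h0 : i % p = j % p := by
        have := hd 0 (by omega)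
        unfold d0 at this
        rw [pow_zero, Nat.div_one, Nat.div_one] at this
        exact this
      have hstep : ∀ n q, d0 p n (q+1) = d0 p (n / p) q := by
        intro n q
        unfold d0
        rw [Nat.div_div_eq_div_mul, ← pow_succ']
      have hi' : i / p < p ^ m := by
        rw [Nat.div_lt_iff_lt_mul hp, ← pow_succ]; exact hi
      have hj' : j / p < p ^ m := by
        rw [Nat.div_lt_iff_lt_mul hp, ← pow_succ]; exact hj
      have : i / p = j / p := by
        apply ih _ _ hi' hj'
        intro q hq
        rw [← hstep, ← hstep]
        exact hd (q+1) (by omega)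
      conv_lhs => rw [← Nat.div_add_mod i p]
      conv_rhs => rw [← Nat.div_add_mod j p]
      rw [this, h0]

lemma modc_lt (p n k c : ℕ) (hp : 0 < p) (hc : c < p) : n % p ^ k + c * p ^ k < p ^ (k+1) := by
  have h1 : n % p ^ k < p ^ k := Nat.mod_lt n (pow_pos hp k)
  have : p ^ (k+1) = p * p ^ k := by rw [pow_succ]; ring
  rw [this]
  nlinarith [pow_pos hp k]

lemma setd_div (p n k c : ℕ) (hp : 0 < p) (hc : c < p) :
    setd p n k c / p ^ (k+1) = n / p ^ (k+1) := by
  unfold setd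
  have e1 : n % p ^ k + c * p ^ k + n / p ^ (k+1) * p ^ (k+1)
      = (n % p ^ k + c * p ^ k) + n / p ^ (k+1) * p ^ (k+1) := by ring
  rw [e1, Nat.add_mul_div_right _ _ (pow_pos hp (k+1)),
    Nat.div_eq_of_lt (modc_lt p n k c hp hc), zero_add]

lemma setd_mod (p n k c : ℕ) (hp : 0 < p) :
    setd p n k c % p ^ k = n % p ^ k := by
  unfold setd
  have e1 : n % p ^ k + c * p ^ k + n / p ^ (k+1) * p ^ (k+1)
      = n % p ^ k + (c + n / p ^ (k+1) * p) * p ^ k := by rw [pow_succ]; ring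
  rw [e1, Nat.add_mul_mod_self_right, Nat.mod_eq_of_lt (Nat.mod_lt n (pow_pos hp k))]

lemma setd_setd (p n k c c' : ℕ) (hp : 0 < p) (hc : c < p) :
    setd p (setd p n k c) k c' = setd p n k c' := by
  conv_lhs => rw [show setd p (setd p n k c) k c'
    = setd p n k c % p ^ k + c' * p ^ k + setd p n k c / p ^ (k+1) * p ^ (k+1) from rfl]
  rw [setd_mod p n k c hp, setd_div p n k c hp hc]
  rfl


/-- `dig` in terms of `d0`. -/
lemma dig_d0 (p n x : ℕ) : dig p n x = ((d0 p n (x-1) : ℕ) : ZMod p) := rfl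

lemma dig_inj (p n n' x : ℕ) (hp : 0 < p) :
    dig p n x = dig p n' x ↔ d0 p n (x-1) = d0 p n' (x-1) := by
  constructor
  · intro hh
    have := congrArg ZMod.val hh
    rwa [dig_d0, dig_d0, ZMod.val_cast_of_lt (d0_lt p n _ hp),
      ZMod.val_cast_of_lt (d0_lt p n' _ hp)] at this
  · intro hh; rw [dig_d0, dig_d0, hh]

lemma dig_setd (p n k c x : ℕ) (hp : 0 < p) (hc : c < p) (hx : 1 ≤ x) :
    dig p (setd p n k c) x = if x = k+1 then ((c : ℕ) : ZMod p) else dig p n x := by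
  by_cases hxk : x = k+1
  · subst hxk
    simp only [if_pos]
    rw [dig_d0, Nat.add_sub_cancel, d0_setd_self p n k c hp hc]
  · rw [if_neg hxk, dig_d0, dig_d0]
    rcases Nat.lt_or_ge (x-1) k with hlt | hge
    · rw [d0_setd_lt p n k c _ hp hlt]
    · have : k < x - 1 := by omega
      rw [d0_setd_gt p n k c _ hp hc this]

/-- The set of indices in `[s+1, m]` where the digits of `i` and `i+τ` differ (via `π`). -/
def DsetS (p s m τ : ℕ) (π : Equiv.Perm ℕ) (i : ℕ) : Set ℕ :=
  {r | (s+1 ≤ r ∧ r ≤ m) ∧ dig p i (π r) ≠ dig p (i + τ) (π r)}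

noncomputable def Tof (p s m τ : ℕ) (π : Equiv.Perm ℕ) (i : ℕ) : ℕ :=
  sInf (DsetS p s m τ π i)

noncomputable def kof (p s m τ : ℕ) (π : Equiv.Perm ℕ) (i : ℕ) : ℕ :=
  π (Tof p s m τ π i - 1) - 1

section Struct

variable (p s m lam τ : ℕ) (π : Equiv.Perm ℕ)

lemma pi_surj (hπ : ∀ r ∈ Finset.Icc s m, π r ∈ Finset.Icc s m)
    (x : ℕ) (hx : x ∈ Finset.Icc s m) : ∃ r ∈ Finset.Icc s m, π r = x := by
  have := Finset.surj_on_of_inj_on_of_card_le (s := Finset.Icc s m) (t := Finset.Icc s m)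
    (fun r _ => π r) (fun r hr => hπ r hr)
    (fun r₁ r₂ _ _ hh => π.injective hh) le_rfl x hx
  obtain ⟨r, hr, hxr⟩ := this
  exact ⟨r, hr, hxr.symm⟩

lemma C2_struct (hp : 0 < p) (hs : 1 ≤ s) (hsm : s ≤ m)
    (hπ : ∀ r ∈ Finset.Icc s m, π r ∈ Finset.Icc s m)
    (hτ0 : 0 < τ) (hτS : p ^ (s-1) ∣ τ) (hτL : τ < p ^ m)
    (i : ℕ) (hi : i < p ^ m - τ)
    (hC2 : dig p i (π s) = dig p (i + τ) (π s)) :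
    (s + 1 ≤ Tof p s m τ π i ∧ Tof p s m τ π i ≤ m) ∧
    dig p i (π (Tof p s m τ π i)) ≠ dig p (i+τ) (π (Tof p s m τ π i)) ∧
    (∀ r, s ≤ r → r < Tof p s m τ π i → dig p i (π r) = dig p (i+τ) (π r)) ∧
    (s ≤ kof p s m τ π i + 1 ∧ kof p s m τ π i + 1 ≤ m ∧
      kof p s m τ π i + 1 = π (Tof p s m τ π i - 1)) := by
  have hij : i + τ < p ^ m := by omega
  have hi' : i < p ^ m := by omega
  -- low digits agree
  have hlowdig : ∀ x, 1 ≤ x → x ≤ s - 1 → dig p i x = dig p (i+τ) x := by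
    intro x hx1 hx2
    rw [dig_inj _ _ _ _ hp]
    exact (d0_add_dvd p i τ (x-1) hp (dvd_trans (pow_dvd_pow p (by omega)) hτS)).symm
  -- the difference set is nonempty
  have hne : (DsetS p s m τ π i).Nonempty := by
    have hij_ne : i ≠ i + τ := by omega
    have hdq : ∃ q, q < m ∧ d0 p i q ≠ d0 p (i+τ) q := by
      by_contra hcon
      push_neg at hcon
      exact hij_ne (digits_inj p hp m i (i+τ) hi' hij (fun q hq => hcon q hq))
    obtain ⟨q, hqm, hq⟩ := hdq
    have hdigx : dig p i (q+1) ≠ dig p (i+τ) (q+1) := by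
      rw [Ne, dig_inj _ _ _ _ hp, Nat.add_sub_cancel]
      exact hq
    have hx_s : s ≤ q + 1 := by
      by_contra hcon
      exact hdigx (hlowdig (q+1) (by omega) (by omega))
    obtain ⟨r, hr, hπr⟩ := pi_surj s m π hπ (q+1) (Finset.mem_Icc.mpr ⟨hx_s, by omega⟩)
    have hr_ne : r ≠ s := by
      intro hrs
      subst hrs
      rw [hπr] at hC2
      exact hdigx hC2
    rw [Finset.mem_Icc] at hr
    exact ⟨r, ⟨by omega, by omega⟩, by rw [hπr]; exact hdigx⟩
  have ht_mem := Nat.sInf_mem hne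
  obtain ⟨⟨ht1, ht2⟩, htdiff⟩ := ht_mem
  have hTdef : Tof p s m τ π i = sInf (DsetS p s m τ π i) := rfl
  refine ⟨⟨ht1, ht2⟩, htdiff, ?_, ?_⟩
  · intro r hr1 hr2
    rcases Nat.eq_or_lt_of_le hr1 with hrs | hrs
    · rw [hrs] at hC2; exact hC2
    · have hnotmem : r ∉ DsetS p s m τ π i := Nat.notMem_of_lt_sInf hr2
      by_contra hcon
      exact hnotmem ⟨⟨by omega, by omega⟩, hcon⟩
  · have htm1 : Tof p s m τ π i - 1 ∈ Finset.Icc s m := Finset.mem_Icc.mpr ⟨by omega, by omega⟩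
    have := hπ _ htm1
    rw [Finset.mem_Icc] at this
    unfold kof
    omega

end Struct

section Orbit

variable (p s m τ : ℕ) (π : Equiv.Perm ℕ)

lemma orbit_facts (hp : 0 < p) (hs : 1 ≤ s) (hsm : s ≤ m)
    (hπ : ∀ r ∈ Finset.Icc s m, π r ∈ Finset.Icc s m)
    (hτ0 : 0 < τ) (hτS : p ^ (s-1) ∣ τ) (hτL : τ < p ^ m)
    (i : ℕ) (hi : i < p ^ m - τ)
    (hC2 : dig p i (π s) = dig p (i + τ) (π s)) (c : ℕ) (hc : c < p) :
    setd p i (kof p s m τ π i) c + τ = setd p (i+τ) (kof p s m τ π i) c ∧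
    setd p i (kof p s m τ π i) c < p ^ m - τ ∧
    dig p (setd p i (kof p s m τ π i) c) (π s)
      = dig p (setd p i (kof p s m τ π i) c + τ) (π s) ∧
    kof p s m τ π (setd p i (kof p s m τ π i) c) = kof p s m τ π i ∧
    d0 p (setd p i (kof p s m τ π i) c) (kof p s m τ π i) = c := by
  obtain ⟨⟨ht1, ht2⟩, htdiff, hmin, hk1, hk2, hk3⟩ :=
    C2_struct p s m τ π hp hs hsm hπ hτ0 hτS hτL i hi hC2
  set t := Tof p s m τ π i with hT
  set k := kof p s m τ π i with hK
  have hij : i + τ < p ^ m := by omega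
  have hi' : i < p ^ m := by omega
  have hkm : k < m := by omega
  -- digits of i and i+τ agree at position k+1 = π (t-1)
  have hdig_pos : dig p i (k+1) = dig p (i+τ) (k+1) := by
    rw [hk3]
    exact hmin (t-1) (by omega) (by omega)
  have hd0k : d0 p i k = d0 p (i+τ) k := by
    have := (dig_inj p i (i+τ) (k+1) hp).mp hdig_pos
    rwa [Nat.add_sub_cancel] at this
  -- O1
  have O1 : setd p i k c + τ = setd p (i+τ) k c := by
    have e1 := setd_add p i k c
    have e2 := setd_add p (i+τ) k c
    rw [hd0k] at e1
    omega
  -- O2 range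
  have hjlt : setd p (i+τ) k c < p ^ m := setd_lt p (i+τ) k c m hp hij hkm hc
  have O2 : setd p i k c < p ^ m - τ := by omega
  -- dig of σ c i at positions
  have hdig_i : ∀ x, 1 ≤ x →
      dig p (setd p i k c) x = if x = k+1 then ((c:ℕ) : ZMod p) else dig p i x :=
    fun x hx => dig_setd p i k c x hp hc hx
  have hdig_j : ∀ x, 1 ≤ x →
      dig p (setd p (i+τ) k c) x = if x = k+1 then ((c:ℕ) : ZMod p) else dig p (i+τ) x :=
    fun x hx => dig_setd p (i+τ) k c x hp hc hx
  have hπs_pos : 1 ≤ π s := by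
    have := hπ s (Finset.mem_Icc.mpr ⟨le_rfl, hsm⟩)
    rw [Finset.mem_Icc] at this
    omega
  -- O3 : same dig at π s
  have O3 : dig p (setd p i k c) (π s) = dig p (setd p i k c + τ) (π s) := by
    rw [O1, hdig_i _ hπs_pos, hdig_j _ hπs_pos]
    by_cases hps : π s = k + 1
    · rw [if_pos hps, if_pos hps]
    · rw [if_neg hps, if_neg hps]; exact hC2
  -- O4 : stability of the difference set, hence of Tof and kof
  have hDset : DsetS p s m τ π (setd p i k c) = DsetS p s m τ π i := by
    ext r
    unfold DsetS
    simp only [Set.mem_setOf_eq]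
    constructor
    · rintro ⟨hb, hd⟩
      refine ⟨hb, ?_⟩
      intro hcon
      apply hd
      have hπr_pos : 1 ≤ π r := by
        have := hπ r (Finset.mem_Icc.mpr ⟨by omega, by omega⟩)
        rw [Finset.mem_Icc] at this; omega
      rw [O1, hdig_i _ hπr_pos, hdig_j _ hπr_pos]
      by_cases hps : π r = k + 1
      · rw [if_pos hps, if_pos hps]
      · rw [if_neg hps, if_neg hps]; exact hcon
    · rintro ⟨hb, hd⟩
      refine ⟨hb, ?_⟩
      intro hcon
      apply hd
      have hπr_pos : 1 ≤ π r := by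
        have := hπ r (Finset.mem_Icc.mpr ⟨by omega, by omega⟩)
        rw [Finset.mem_Icc] at this; omega
      rw [O1, hdig_i _ hπr_pos, hdig_j _ hπr_pos] at hcon
      by_cases hps : π r = k + 1
      · rw [hps]; exact hdig_pos
      · rw [if_neg hps, if_neg hps] at hcon; exact hcon
  have O4 : kof p s m τ π (setd p i k c) = k := by
    unfold kof Tof
    rw [hDset]
    rw [hK]
    rfl
  exact ⟨O1, O2, O3, O4, d0_setd_self p i k c hp hc⟩

end Orbit

lemma K_ne (p lam : ℕ) (hp : 0 < p) (hl : 0 < lam) (hpl : p ∣ lam) (d e : ℕ)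
    (hd : d < p) (he : e < p) (hne : d ≠ e) :
    ((lam / p : ℕ) : ZMod lam) * ((d : ZMod lam) - (e : ZMod lam)) ≠ 0 := by
  obtain ⟨q, hq⟩ := hpl
  have hq0 : 0 < q := by
    rcases Nat.eq_zero_or_pos q with h | h
    · subst h; simp at hq; omega
    · exact h
  have hqp : lam / p = q := by rw [hq, Nat.mul_div_cancel_left q hp]
  intro h0
  have h1 : (((q : ℤ) * ((d : ℤ) - (e : ℤ)) : ℤ) : ZMod lam) = 0 := by
    have h0' : ((q : ℕ) : ZMod lam) * ((d : ZMod lam) - (e : ZMod lam)) = 0 := by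
      rw [← hqp]; exact h0
    push_cast at h0' ⊢
    linear_combination h0'
  rw [ZMod.intCast_zmod_eq_zero_iff_dvd] at h1
  rw [hq] at h1
  push_cast at h1
  obtain ⟨w, hw⟩ := h1
  have hq0' : (q : ℤ) ≠ 0 := by exact_mod_cast hq0.ne'
  have h2 : (d : ℤ) - e = p * w := by
    apply mul_left_cancel₀ hq0'
    linear_combination hw
  have h3 : (d : ℤ) - e ≠ 0 := by
    intro hcon; apply hne; omega
  have h4 : -(p:ℤ) < (d : ℤ) - e ∧ (d : ℤ) - e < p := by omega
  rcases lt_trichotomy w 0 with hw' | hw' | hw'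
  · nlinarith
  · subst hw'; simp at h2; omega
  · nlinarith

lemma pK_zero (p lam : ℕ) (hpl : p ∣ lam) (x : ZMod lam) :
    (p : ZMod lam) * (((lam / p : ℕ) : ZMod lam) * x) = 0 := by
  rw [← mul_assoc, ← Nat.cast_mul, Nat.mul_div_cancel' hpl, ZMod.natCast_self, zero_mul]

section Eval

variable (p s m lam : ℕ) (π : Equiv.Perm ℕ)
  (g : ℕ → ZMod lam) (g₀ : ZMod lam) (h : (ℕ → ZMod p) → ZMod lam)
  (f : (ℕ → ZMod p) → ZMod lam) (a : ZMod p → (ℕ → ZMod p) → ZMod lam)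

lemma case1_eval (hp : 0 < p) (hl : 0 < lam) (hpl : p ∣ lam)
    (hf : ∀ v : ℕ → ZMod p,
      f v = ((lam / p : ℕ) : ZMod lam) *
            (∑ i ∈ Finset.Ico s m, ((v (π i)).val : ZMod lam) * ((v (π (i + 1))).val : ZMod lam))
        + ∑ i ∈ Finset.Icc 1 m, g i * ((v i).val : ZMod lam) + g₀ + h v)
    (ha : ∀ (γ : ZMod p) (v : ℕ → ZMod p),
      a γ v = f v + ((lam / p : ℕ) : ZMod lam) * ((v (π s)).val : ZMod lam) * (γ.val : ZMod lam))
    (τ i : ℕ)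
    (hC1 : dig p i (π s) ≠ dig p (i + τ) (π s)) :
    ∃ A K : ZMod lam, K ≠ 0 ∧ (p : ZMod lam) * K = 0 ∧
      ∀ γ : ℕ, γ < p →
        a (γ : ZMod p) (dig p i) - a (γ : ZMod p) (dig p (i + τ))
          = A + (γ : ZMod lam) * K := by
  set dv := d0 p i (π s - 1) with hdv
  set du := d0 p (i + τ) (π s - 1) with hdu
  have hdiff : dv ≠ du := by
    intro hcon
    exact hC1 ((dig_inj p i (i+τ) (π s) hp).mpr hcon)
  refine ⟨f (dig p i) - f (dig p (i + τ)),
    ((lam / p : ℕ) : ZMod lam) * ((dv : ZMod lam) - (du : ZMod lam)),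
    K_ne p lam hp hl hpl dv du (d0_lt _ _ _ hp) (d0_lt _ _ _ hp) hdiff,
    pK_zero p lam hpl _, ?_⟩
  intro γ hγ
  rw [ha, ha]
  have hval : ((γ : ZMod p).val : ZMod lam) = (γ : ZMod lam) := by
    rw [ZMod.val_natCast, Nat.mod_eq_of_lt hγ]
  have hvs : ((dig p i (π s)).val : ZMod lam) = (dv : ZMod lam) := by
    rw [dig_d0, ZMod.val_cast_of_lt (d0_lt _ _ _ hp)]
  have hus : ((dig p (i+τ) (π s)).val : ZMod lam) = (du : ZMod lam) := by
    rw [dig_d0, ZMod.val_cast_of_lt (d0_lt _ _ _ hp)]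
  rw [hval, hvs, hus]
  ring

end Eval

section Eval2

variable (p s m lam τ : ℕ) (π : Equiv.Perm ℕ)
  (g : ℕ → ZMod lam) (g₀ : ZMod lam) (h : (ℕ → ZMod p) → ZMod lam)
  (f : (ℕ → ZMod p) → ZMod lam) (a : ZMod p → (ℕ → ZMod p) → ZMod lam)

lemma orbit_eval (hp : 0 < p) (hs : 1 ≤ s) (hsm : s ≤ m) (hl : 0 < lam) (hpl : p ∣ lam)
    (hπ : ∀ r ∈ Finset.Icc s m, π r ∈ Finset.Icc s m)
    (hdep : ∀ u w : ℕ → ZMod p, (∀ t, 1 ≤ t → t ≤ s - 1 → u t = w t) → h u = h w)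
    (hf : ∀ v : ℕ → ZMod p,
      f v = ((lam / p : ℕ) : ZMod lam) *
            (∑ i ∈ Finset.Ico s m, ((v (π i)).val : ZMod lam) * ((v (π (i + 1))).val : ZMod lam))
        + ∑ i ∈ Finset.Icc 1 m, g i * ((v i).val : ZMod lam) + g₀ + h v)
    (ha : ∀ (γ : ZMod p) (v : ℕ → ZMod p),
      a γ v = f v + ((lam / p : ℕ) : ZMod lam) * ((v (π s)).val : ZMod lam) * (γ.val : ZMod lam))
    (hτ0 : 0 < τ) (hτS : p ^ (s-1) ∣ τ) (hτL : τ < p ^ m)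
    (i : ℕ) (hi : i < p ^ m - τ)
    (hC2 : dig p i (π s) = dig p (i + τ) (π s)) :
    ∃ B K : ZMod lam, K ≠ 0 ∧ (p : ZMod lam) * K = 0 ∧
      ∀ c : ℕ, c < p → ∀ γ : ZMod p,
        a γ (dig p (setd p i (kof p s m τ π i) c))
          - a γ (dig p (setd p i (kof p s m τ π i) c + τ))
          = B + (c : ZMod lam) * K := by
  obtain ⟨⟨ht1, ht2⟩, htdiff, hmin, hk1, hk2, hk3⟩ :=
    C2_struct p s m τ π hp hs hsm hπ hτ0 hτS hτL i hi hC2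
  set t := Tof p s m τ π i with hT
  set k := kof p s m τ π i with hK
  have hij : i + τ < p ^ m := by omega
  -- the coefficient K
  set dv := d0 p i (π t - 1) with hdv
  set du := d0 p (i + τ) (π t - 1) with hdu
  have hdiff : dv ≠ du := fun hcon => htdiff ((dig_inj p i (i+τ) (π t) hp).mpr hcon)
  set δ : ZMod lam := (dv : ZMod lam) - (du : ZMod lam) with hδ
  refine ⟨a 0 (dig p (setd p i k 0)) - a 0 (dig p (setd p i k 0 + τ)),
    ((lam / p : ℕ) : ZMod lam) * δ,
    K_ne p lam hp hl hpl dv du (d0_lt _ _ _ hp) (d0_lt _ _ _ hp) hdiff,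
    pK_zero p lam hpl _, ?_⟩
  intro c hc γ
  -- orbit facts for c and for 0
  obtain ⟨O1c, O2c, O3c, O4c, O5c⟩ :=
    orbit_facts p s m τ π hp hs hsm hπ hτ0 hτS hτL i hi hC2 c hc
  obtain ⟨O10, O20, O30, O40, O50⟩ :=
    orbit_facts p s m τ π hp hs hsm hπ hτ0 hτS hτL i hi hC2 0 hp
  rw [← hK] at O1c O2c O3c O4c O5c O10 O20 O30 O40 O50
  -- digit value descriptions (ℕ-cast into ZMod lam)
  have hval : ∀ (n x c' : ℕ), c' < p → 1 ≤ x →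
      ((dig p (setd p n k c') x).val : ZMod lam)
        = if x = k+1 then ((c' : ℕ) : ZMod lam) else ((d0 p n (x-1) : ℕ) : ZMod lam) := by
    intro n x c' hc' hx
    rw [dig_setd p n k c' x hp hc' hx]
    by_cases hxk : x = k+1
    · rw [if_pos hxk, if_pos hxk, ZMod.val_cast_of_lt hc']
    · rw [if_neg hxk, if_neg hxk, dig_d0, ZMod.val_cast_of_lt (d0_lt _ _ _ hp)]
  -- abbreviations
  set q : ZMod lam := ((lam / p : ℕ) : ZMod lam) with hq
  -- positions are ≥ 1 within Icc s m
  have hpos : ∀ r, s ≤ r → r ≤ m → 1 ≤ π r := by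
    intro r h1 h2
    have := hπ r (Finset.mem_Icc.mpr ⟨h1, h2⟩)
    rw [Finset.mem_Icc] at this
    omega
  have hπt_ne : π t ≠ k + 1 := by
    rw [hk3]
    intro hcon
    have := π.injective hcon
    omega
  -- low digit agreement (for the `h` argument)
  have hlow : ∀ x, 1 ≤ x → x ≤ s - 1 → d0 p i (x-1) = d0 p (i+τ) (x-1) := by
    intro x hx1 hx2
    exact (d0_add_dvd p i τ (x-1) hp (dvd_trans (pow_dvd_pow p (by omega)) hτS)).symm
  have hh : ∀ c' : ℕ, c' < p →
      h (dig p (setd p i k c')) = h (dig p (setd p (i+τ) k c')) := by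
    intro c' hc'
    apply hdep
    intro x hx1 hx2
    rw [dig_setd p i k c' x hp hc' hx1, dig_setd p (i+τ) k c' x hp hc' hx1]
    have hxk : x ≠ k + 1 := by omega
    rw [if_neg hxk, if_neg hxk, dig_d0, dig_d0, hlow x hx1 hx2]
  -- the γ-terms agree
  have hγterm : ∀ c' : ℕ, c' < p →
      ((dig p (setd p i k c') (π s)).val : ZMod lam)
        = ((dig p (setd p (i+τ) k c') (π s)).val : ZMod lam) := by
    intro c' hc'
    rw [hval i (π s) c' hc' (hpos s le_rfl hsm), hval (i+τ) (π s) c' hc' (hpos s le_rfl hsm)]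
    by_cases hps : π s = k + 1
    · rw [if_pos hps, if_pos hps]
    · rw [if_neg hps, if_neg hps]
      congr 1
      exact (dig_inj p i (i+τ) (π s) hp).mp hC2
  -- linear sums
  have hLin : ∀ c' : ℕ, c' < p →
      (∑ x ∈ Finset.Icc 1 m, g x * ((dig p (setd p i k c') x).val : ZMod lam))
        - (∑ x ∈ Finset.Icc 1 m, g x * ((dig p (setd p (i+τ) k c') x).val : ZMod lam))
      = (∑ x ∈ Finset.Icc 1 m, g x * ((dig p (setd p i k 0) x).val : ZMod lam))
        - (∑ x ∈ Finset.Icc 1 m, g x * ((dig p (setd p (i+τ) k 0) x).val : ZMod lam)) := by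
    intro c' hc'
    rw [← Finset.sum_sub_distrib, ← Finset.sum_sub_distrib]
    apply Finset.sum_congr rfl
    intro x hx
    rw [Finset.mem_Icc] at hx
    rw [hval i x c' hc' hx.1, hval (i+τ) x c' hc' hx.1,
      hval i x 0 hp hx.1, hval (i+τ) x 0 hp hx.1]
    by_cases hxk : x = k+1
    · rw [if_pos hxk, if_pos hxk, if_pos hxk, if_pos hxk]; ring
    · rw [if_neg hxk, if_neg hxk, if_neg hxk, if_neg hxk]
  -- quadratic sums
  have hQuad : ∀ c' : ℕ, c' < p →
      (∑ r ∈ Finset.Ico s m,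
          ((dig p (setd p i k c') (π r)).val : ZMod lam)
            * ((dig p (setd p i k c') (π (r+1))).val : ZMod lam))
        - (∑ r ∈ Finset.Ico s m,
          ((dig p (setd p (i+τ) k c') (π r)).val : ZMod lam)
            * ((dig p (setd p (i+τ) k c') (π (r+1))).val : ZMod lam))
      = ((∑ r ∈ Finset.Ico s m,
          ((dig p (setd p i k 0) (π r)).val : ZMod lam)
            * ((dig p (setd p i k 0) (π (r+1))).val : ZMod lam))
        - (∑ r ∈ Finset.Ico s m,
          ((dig p (setd p (i+τ) k 0) (π r)).val : ZMod lam)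
            * ((dig p (setd p (i+τ) k 0) (π (r+1))).val : ZMod lam)))
        + (c' : ZMod lam) * δ := by
    intro c' hc'
    rw [← Finset.sum_sub_distrib, ← Finset.sum_sub_distrib]
    have hsplit : ∀ r ∈ Finset.Ico s m,
        (((dig p (setd p i k c') (π r)).val : ZMod lam)
            * ((dig p (setd p i k c') (π (r+1))).val : ZMod lam)
          - ((dig p (setd p (i+τ) k c') (π r)).val : ZMod lam)
            * ((dig p (setd p (i+τ) k c') (π (r+1))).val : ZMod lam))
        = (((dig p (setd p i k 0) (π r)).val : ZMod lam)
            * ((dig p (setd p i k 0) (π (r+1))).val : ZMod lam)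
          - ((dig p (setd p (i+τ) k 0) (π r)).val : ZMod lam)
            * ((dig p (setd p (i+τ) k 0) (π (r+1))).val : ZMod lam))
          + (if r = t - 1 then (c' : ZMod lam) * δ else 0) := by
      intro r hr
      rw [Finset.mem_Ico] at hr
      have hr1 : 1 ≤ π r := hpos r hr.1 (by omega)
      have hr2 : 1 ≤ π (r+1) := hpos (r+1) (by omega) (by omega)
      rw [hval i (π r) c' hc' hr1, hval (i+τ) (π r) c' hc' hr1,
        hval i (π (r+1)) c' hc' hr2, hval (i+τ) (π (r+1)) c' hc' hr2,
        hval i (π r) 0 hp hr1, hval (i+τ) (π r) 0 hp hr1,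
        hval i (π (r+1)) 0 hp hr2, hval (i+τ) (π (r+1)) 0 hp hr2]
      by_cases hrt : r = t - 1
      · -- the pivot term
        have hπr : π r = k + 1 := by rw [hrt, ← hk3]
        have hr1t : r + 1 = t := by omega
        have hπr1 : π (r+1) ≠ k + 1 := by rw [hr1t]; exact hπt_ne
        have e1 : π (r+1) - 1 = π t - 1 := by rw [hr1t]
        simp only [if_pos hrt, if_pos hπr, if_neg hπr1, e1, ← hdv, ← hdu]
        push_cast
        ring
      · rw [if_neg hrt]
        have hπr : π r ≠ k + 1 := by
          intro hcon
          exact hrt (π.injective (hcon.trans hk3))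
        by_cases hπr1 : π (r+1) = k + 1
        · -- r + 1 = t - 1, digits at π r agree
          have hr1t : r + 1 = t - 1 := π.injective (hπr1.trans hk3)
          have hdeq : d0 p i (π r - 1) = d0 p (i+τ) (π r - 1) :=
            (dig_inj p i (i+τ) (π r) hp).mp (hmin r hr.1 (by omega))
          simp only [if_neg hπr, if_pos hπr1, hdeq]
          push_cast
          ring
        · simp only [if_neg hπr, if_neg hπr1]
          push_cast
          ring
    rw [Finset.sum_congr rfl hsplit, Finset.sum_add_distrib,
      Finset.sum_ite_eq' (Finset.Ico s m) (t-1) (fun _ => (c' : ZMod lam) * δ),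
      if_pos (Finset.mem_Ico.mpr ⟨by omega, by omega⟩)]
  -- now assemble
  rw [O1c, O10, ha, ha, ha, ha, hf, hf, hf, hf]
  have h1 := hh c hc
  have h2 := hh 0 hp
  have h3 := hγterm c hc
  have h4 := hγterm 0 hp
  have h5 := hLin c hc
  have h6 := hLin 0 hp
  have h7 := hQuad c hc
  have h8 := hQuad 0 hp
  push_cast at h8
  -- h8 : (quad for 0) = (quad for 0) + 0 * δ  (trivial) ; not needed
  linear_combination q * h7 + h5 + h1 - h2
    + (q * ((γ.val : ℕ) : ZMod lam)) * h3
    - (q * ((ZMod.val (0 : ZMod p) : ℕ) : ZMod lam)) * h4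

end Eval2

theorem stmt0 (p m s lam : ℕ) (hp : p.Prime) (hm : 1 ≤ m) (hs : 1 ≤ s) (hsm : s ≤ m)
    (hlam : 0 < lam) (hpl : p ∣ lam)
    (π : Equiv.Perm ℕ) (hπ : ∀ i ∈ Finset.Icc s m, π i ∈ Finset.Icc s m)
    (g : ℕ → ZMod lam) (g₀ : ZMod lam)
    (h : (ℕ → ZMod p) → ZMod lam)
    (hdep : ∀ u w : ℕ → ZMod p, (∀ t, 1 ≤ t → t ≤ s - 1 → u t = w t) → h u = h w)
    (hs1 : s = 1 → ∀ u, h u = 0)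
    (f : (ℕ → ZMod p) → ZMod lam)
    (hf : ∀ v : ℕ → ZMod p,
      f v = ((lam / p : ℕ) : ZMod lam) *
            (∑ i ∈ Finset.Ico s m, ((v (π i)).val : ZMod lam) * ((v (π (i + 1))).val : ZMod lam))
        + ∑ i ∈ Finset.Icc 1 m, g i * ((v i).val : ZMod lam) + g₀ + h v)
    (a : ZMod p → (ℕ → ZMod p) → ZMod lam)
    (ha : ∀ (γ : ZMod p) (v : ℕ → ZMod p),
      a γ v = f v + ((lam / p : ℕ) : ZMod lam) * ((v (π s)).val : ZMod lam) * (γ.val : ZMod lam))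
    (τ : ℕ) (hτ0 : 0 < τ) (hτL : τ < p ^ m) (hτS : p ^ (s - 1) ∣ τ) :
    ∑ γ ∈ Finset.range p,
      aacf (p ^ m) (fun i => eZMod lam (a (γ : ZMod p) (dig p i))) τ = 0 := by

  classical
  have hp0 : 0 < p := hp.pos
  -- rewrite the correlation as a double sum of characters of differences
  have hstep1 : ∀ γ : ZMod p, aacf (p ^ m) (fun i => eZMod lam (a γ (dig p i))) τ
      = ∑ i ∈ Finset.range (p ^ m - τ), eZMod lam (a γ (dig p i) - a γ (dig p (i + τ))) := by
    intro γ
    unfold aacf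
    apply Finset.sum_congr rfl
    intro i _
    rw [eZMod_conj lam hlam, ← eZMod_add lam hlam, ← sub_eq_add_neg]
  simp_rw [hstep1]
  rw [Finset.sum_comm]
  rw [← Finset.sum_filter_add_sum_filter_not (Finset.range (p ^ m - τ))
    (fun i => dig p i (π s) = dig p (i + τ) (π s))]
  have hC1part : ∑ i ∈ (Finset.range (p ^ m - τ)).filter
      (fun i => ¬ dig p i (π s) = dig p (i + τ) (π s)),
      ∑ γ ∈ Finset.range p,
        eZMod lam (a (γ : ZMod p) (dig p i) - a (γ : ZMod p) (dig p (i+τ))) = 0 := by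
    apply Finset.sum_eq_zero
    intro i hi
    rw [Finset.mem_filter] at hi
    obtain ⟨A, K, hK, hpK, hform⟩ :=
      case1_eval p s m lam π g g₀ h f a hp0 hlam hpl hf ha τ i hi.2
    have hcongr : ∀ γ ∈ Finset.range p,
        eZMod lam (a (γ : ZMod p) (dig p i) - a (γ : ZMod p) (dig p (i+τ)))
          = eZMod lam (A + (γ : ZMod lam) * K) := by
      intro γ hγ
      rw [hform γ (Finset.mem_range.mp hγ)]
    rw [Finset.sum_congr rfl hcongr]
    exact sum_eZMod_geom p lam hlam A K hK hpK
  have hC2part : ∑ i ∈ (Finset.range (p ^ m - τ)).filter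
      (fun i => dig p i (π s) = dig p (i + τ) (π s)),
      ∑ γ ∈ Finset.range p,
        eZMod lam (a (γ : ZMod p) (dig p i) - a (γ : ZMod p) (dig p (i+τ))) = 0 := by
    set C2 := (Finset.range (p ^ m - τ)).filter
      (fun i => dig p i (π s) = dig p (i + τ) (π s)) with hC2def
    set G : ℕ → ℂ := fun x => ∑ γ ∈ Finset.range p,
      eZMod lam (a (γ : ZMod p) (dig p x) - a (γ : ZMod p) (dig p (x+τ))) with hGdef
    show ∑ i ∈ C2, G i = 0
    have hmem : ∀ i ∈ C2, i < p ^ m - τ ∧ dig p i (π s) = dig p (i + τ) (π s) := by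
      intro i hi
      rw [hC2def, Finset.mem_filter, Finset.mem_range] at hi
      exact hi
    -- each orbit sums to zero
    have key1 : ∀ i ∈ C2, ∑ c ∈ Finset.range p, G (setd p i (kof p s m τ π i) c) = 0 := by
      intro i hi
      obtain ⟨hi1, hi2⟩ := hmem i hi
      obtain ⟨B, K, hK, hpK, hform⟩ := orbit_eval p s m lam τ π g g₀ h f a
        hp0 hs hsm hlam hpl hπ hdep hf ha hτ0 hτS hτL i hi1 hi2
      rw [hGdef]
      simp only []
      rw [Finset.sum_comm]
      apply Finset.sum_eq_zero
      intro γ _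
      have hcongr : ∀ c ∈ Finset.range p,
          eZMod lam (a (γ : ZMod p) (dig p (setd p i (kof p s m τ π i) c))
            - a (γ : ZMod p) (dig p (setd p i (kof p s m τ π i) c + τ)))
          = eZMod lam (B + (c : ZMod lam) * K) := by
        intro c hc
        rw [hform c (Finset.mem_range.mp hc)]
      rw [Finset.sum_congr rfl hcongr]
      exact sum_eZMod_geom p lam hlam B K hK hpK
    -- the σ-action is measure preserving on C2 × range p
    have horb : ∀ i ∈ C2, ∀ c < p,
        (setd p i (kof p s m τ π i) c ∈ C2 ∧
         kof p s m τ π (setd p i (kof p s m τ π i) c) = kof p s m τ π i ∧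
         d0 p (setd p i (kof p s m τ π i) c) (kof p s m τ π i) = c) := by
      intro i hi c hc
      obtain ⟨hi1, hi2⟩ := hmem i hi
      obtain ⟨O1, O2, O3, O4, O5⟩ :=
        orbit_facts p s m τ π hp0 hs hsm hπ hτ0 hτS hτL i hi1 hi2 c hc
      exact ⟨by rw [hC2def, Finset.mem_filter, Finset.mem_range]; exact ⟨O2, O3⟩, O4, O5⟩
    have hbij : ∑ q ∈ C2 ×ˢ Finset.range p, G (setd p q.1 (kof p s m τ π q.1) q.2)
        = ∑ q ∈ C2 ×ˢ Finset.range p, G q.1 := by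
      apply Finset.sum_bij'
        (i := fun q _ => (setd p q.1 (kof p s m τ π q.1) q.2, d0 p q.1 (kof p s m τ π q.1)))
        (j := fun q _ => (setd p q.1 (kof p s m τ π q.1) q.2, d0 p q.1 (kof p s m τ π q.1)))
      · intro q hq
        rw [Finset.mem_product, Finset.mem_range] at hq
        obtain ⟨hq1, hq2⟩ := hq
        obtain ⟨hO1, _, _⟩ := horb q.1 hq1 q.2 hq2
        rw [Finset.mem_product, Finset.mem_range]
        exact ⟨hO1, d0_lt _ _ _ hp0⟩
      · intro q hq
        rw [Finset.mem_product, Finset.mem_range] at hq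
        obtain ⟨hq1, hq2⟩ := hq
        obtain ⟨hO1, _, _⟩ := horb q.1 hq1 q.2 hq2
        rw [Finset.mem_product, Finset.mem_range]
        exact ⟨hO1, d0_lt _ _ _ hp0⟩
      · intro q hq
        rw [Finset.mem_product, Finset.mem_range] at hq
        obtain ⟨hq1, hq2⟩ := hq
        obtain ⟨_, hO4, hO5⟩ := horb q.1 hq1 q.2 hq2
        have hx : setd p (setd p q.1 (kof p s m τ π q.1) q.2)
            (kof p s m τ π (setd p q.1 (kof p s m τ π q.1) q.2))
            (d0 p q.1 (kof p s m τ π q.1)) = q.1 := by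
          rw [hO4, setd_setd p q.1 (kof p s m τ π q.1) q.2 _ hp0 hq2, setd_self]
        have hy : d0 p (setd p q.1 (kof p s m τ π q.1) q.2)
            (kof p s m τ π (setd p q.1 (kof p s m τ π q.1) q.2)) = q.2 := by
          rw [hO4, hO5]
        exact Prod.ext hx hy
      · intro q hq
        rw [Finset.mem_product, Finset.mem_range] at hq
        obtain ⟨hq1, hq2⟩ := hq
        obtain ⟨_, hO4, hO5⟩ := horb q.1 hq1 q.2 hq2
        have hx : setd p (setd p q.1 (kof p s m τ π q.1) q.2)
            (kof p s m τ π (setd p q.1 (kof p s m τ π q.1) q.2))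
            (d0 p q.1 (kof p s m τ π q.1)) = q.1 := by
          rw [hO4, setd_setd p q.1 (kof p s m τ π q.1) q.2 _ hp0 hq2, setd_self]
        have hy : d0 p (setd p q.1 (kof p s m τ π q.1) q.2)
            (kof p s m τ π (setd p q.1 (kof p s m τ π q.1) q.2)) = q.2 := by
          rw [hO4, hO5]
        exact Prod.ext hx hy
      · intro q hq
        rfl
    have hleft : ∑ q ∈ C2 ×ˢ Finset.range p, G q.1 = (p : ℂ) * ∑ i ∈ C2, G i := by
      rw [Finset.sum_product]
      simp only [Finset.sum_const, Finset.card_range, nsmul_eq_mul]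
      rw [← Finset.mul_sum]
    have hright : ∑ q ∈ C2 ×ˢ Finset.range p, G (setd p q.1 (kof p s m τ π q.1) q.2) = 0 := by
      rw [Finset.sum_product]
      exact Finset.sum_eq_zero key1
    have hzero : (p : ℂ) * ∑ i ∈ C2, G i = 0 := by
      rw [← hleft, ← hbij, hright]
    rcases mul_eq_zero.mp hzero with hbad | hgood
    · exact absurd hbad (Nat.cast_ne_zero.mpr hp0.ne')
    · exact hgood
  rw [hC1part, hC2part, add_zero]
end

section
/- Let p_1, …, p_k be primes and λ a positive integer with p_α ∣ λ for all α = 1, …, k. For each α fix an integer m_α ≥ 1, a permutation π_α of {1, …, m_α}, and constants g_{p_α,i}, g_{p_α} ∈ ℤ_λ. Define f_α : ℤ_{p_α}^{m_α} → ℤ_λ by f_α = (λ/p_α)·Σ_{i=1}^{m_α−1} v_{p_α,π_α(i)} v_{p_α,π_α(i+1)} + Σ_{i=1}^{m_α} g_{p_α,i} v_{p_α,i} + g_{p_α} (mod λ), and for γ = (γ_1, …, γ_k) ∈ ℤ_{p_1} × ⋯ × ℤ_{p_k} define a^γ = Σ_{α=1}^{k} f_α + Σ_{α=1}^{k} (λ/p_α)·v_{p_α,π_α(1)}·γ_α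 (mod λ). Then for every integer τ with 0 < τ < L := ∏_{α=1}^{k} p_α^{m_α}, one has Σ_{γ ∈ ℤ_{p_1}×⋯×ℤ_{p_k}} ρ(ψ(a^γ))(τ) = 0; that is, {ψ(a^γ)} is a Golay complementary set of length ∏_{α=1}^{k} p_α^{m_α} and set size ∏_{α=1}^{k} p_α. -/
open Finset

/-- For `0 ≤ i < ∏ α, p α ^ m α` written as `i = Σ_α i_α · ∏_{β<α} p_β^{m_β}`
with `0 ≤ i_α < p_α^{m_α}`, `digv p m i α t` is the `t`-th base-`p_α` digit
(1-indexed) of `i_α`, viewed in `ℤ_{p_α}`. -/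
def digv {k : ℕ} (p m : Fin k → ℕ) (i : ℕ) : (α : Fin k) → ℕ → ZMod (p α) :=
  fun α t =>
    (((((i / ∏ β ∈ Finset.Iio α, p β ^ m β) % p α ^ m α) / p α ^ (t - 1)) % p α : ℕ) :
      ZMod (p α))

noncomputable def EE (q : ℕ) (n : ℤ) : ℂ :=
  Complex.exp (2 * (Real.pi : ℂ) * Complex.I * (n : ℂ) / (q : ℂ))

lemma EE_add (q : ℕ) (a b : ℤ) : EE q (a + b) = EE q a * EE q b := by
  rw [EE, EE, EE, ← Complex.exp_add]
  congr 1
  push_cast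
  ring

lemma EE_zero (q : ℕ) : EE q 0 = 1 := by simp [EE]

lemma EE_dvd (q : ℕ) (n : ℤ) (h : (q : ℤ) ∣ n) : EE q n = 1 := by
  rcases h with ⟨t, rfl⟩
  rcases eq_or_ne q 0 with rfl | hq
  · simp [EE]
  · rw [EE]
    have : 2 * (Real.pi : ℂ) * Complex.I * ((q : ℤ) * t : ℤ) / q
        = (t : ℂ) * (2 * Real.pi * Complex.I) := by
      have hq' : (q : ℂ) ≠ 0 := by exact_mod_cast hq
      field_simp
      push_cast
      ring
    rw [this, Complex.exp_int_mul_two_pi_mul_I]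

lemma EE_congr (q : ℕ) (a b : ℤ) (h : (q : ℤ) ∣ (a - b)) : EE q a = EE q b := by
  have : a = b + (a - b) := by ring
  rw [this, EE_add, EE_dvd q _ h, mul_one]

lemma EE_eq_one_iff (q : ℕ) (hq : q ≠ 0) (n : ℤ) : EE q n = 1 ↔ (q : ℤ) ∣ n := by
  constructor
  · intro h
    rw [EE, Complex.exp_eq_one_iff] at h
    obtain ⟨t, ht⟩ := h
    have hq' : (q : ℂ) ≠ 0 := by exact_mod_cast hq
    have h2 : (2 * (Real.pi : ℂ) * Complex.I) ≠ 0 := by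
      simp [Real.pi_ne_zero, Complex.I_ne_zero]
    have key : 2 * (Real.pi : ℂ) * Complex.I * n = 2 * (Real.pi : ℂ) * Complex.I * (t * q) := by
      rw [div_eq_iff hq'] at ht
      rw [ht]; ring
    have : (n : ℂ) = (t : ℂ) * q := mul_left_cancel₀ h2 key
    have : (n : ℤ) = t * q := by exact_mod_cast this
    exact ⟨t, by linarith⟩
  · exact EE_dvd q n

lemma EE_sub (q : ℕ) (a b : ℤ) : EE q (a - b) = EE q a * EE q (-b) := by
  rw [← EE_add]; ring_nf

lemma EE_conj (q : ℕ) (n : ℤ) : (starRingEnd ℂ) (EE q n) = EE q (-n) := by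
  rw [EE, EE, ← Complex.exp_conj]
  congr 1
  simp only [map_div₀, map_mul, Complex.conj_I, map_ofNat, Complex.conj_natCast,
    map_intCast, Complex.conj_ofReal]
  push_cast
  ring

lemma EE_mul_nat (q : ℕ) (c : ℤ) (n : ℕ) : EE q (c * n) = (EE q c) ^ n := by
  induction n with
  | zero => simp [EE_zero]
  | succ t ih => push_cast; rw [mul_add, EE_add, ih, mul_one, pow_succ]

lemma EE_sum {ι : Type*} (q : ℕ) (s : Finset ι) (f : ι → ℤ) :
    EE q (∑ x ∈ s, f x) = ∏ x ∈ s, EE q (f x) := by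
  classical
  induction s using Finset.cons_induction with
  | empty => simp [EE_zero]
  | cons a s ha ih => rw [Finset.sum_cons, EE_add, ih, Finset.prod_cons]

lemma EE_geom_zero (q : ℕ) (hq : q ≠ 0) (c : ℤ) (P : ℕ)
    (h1 : (q : ℤ) ∣ c * P) (h2 : ¬ (q : ℤ) ∣ c) :
    ∑ n ∈ Finset.range P, EE q (c * n) = 0 := by
  have hz : EE q c ≠ 1 := fun h => h2 ((EE_eq_one_iff q hq c).mp h)
  have : ∑ n ∈ Finset.range P, EE q (c * n) = ∑ n ∈ Finset.range P, (EE q c) ^ n := by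
    refine Finset.sum_congr rfl fun n _ => EE_mul_nat q c n
  rw [this, geom_sum_eq hz, ← EE_mul_nat, EE_dvd q _ h1, sub_self, zero_div]

lemma eZMod_eq_EE (q : ℕ) (hq : q ≠ 0) (n : ℤ) : eZMod q ((n : ℤ) : ZMod q) = EE q n := by
  haveI : NeZero q := ⟨hq⟩
  have h1 : eZMod q ((n : ZMod q)) = EE q (((n : ZMod q)).val : ℤ) := by
    rw [eZMod, EE]; norm_num
  rw [h1]
  apply EE_congr
  rw [← ZMod.intCast_zmod_eq_zero_iff_dvd]
  push_cast
  simp [ZMod.natCast_val, ZMod.intCast_cast]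


/-- replace the digit of `i` at "place value" `e` (radix `P`) by `c` -/
def chg (i e P c : ℕ) : ℕ := i - (i / e % P) * e + c * e

lemma chg_le (i e P : ℕ) : (i / e % P) * e ≤ i :=
  le_trans (Nat.mul_le_mul_right e (Nat.mod_le _ _)) (Nat.div_mul_le_self i e)

/-- canonical decomposition used everywhere -/
lemma chg_eq (i e P c : ℕ) (he : 0 < e) :
    chg i e P c = e * P * (i / e / P) + c * e + i % e ∧
    i = e * P * (i / e / P) + (i / e % P) * e + i % e := by
  have h1 : i = e * (i / e) + i % e := (Nat.div_add_mod i e).symm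
  have h2 : i / e = P * (i / e / P) + i / e % P := (Nat.div_add_mod (i/e) P).symm
  have hdec : i = e * P * (i / e / P) + (i / e % P) * e + i % e := by
    calc i = e * (i / e) + i % e := h1
    _ = e * (P * (i / e / P) + i / e % P) + i % e := by rw [← h2]
    _ = e * P * (i / e / P) + (i / e % P) * e + i % e := by ring
  refine ⟨?_, hdec⟩
  rw [chg]
  omega

lemma chg_lt (L e P c i : ℕ) (he : 0 < e) (hP : 0 < P) (hdvd : e * P ∣ L)
    (hi : i < L) (hc : c < P) : chg i e P c < L := by
  obtain ⟨h1, h2⟩ := chg_eq i e P c he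
  obtain ⟨t, rfl⟩ := hdvd
  have heP : 0 < e * P := Nat.mul_pos he hP
  have hH : i / e / P < t := by
    by_contra h
    push_neg at h
    have : e * P * t ≤ e * P * (i / e / P) := Nat.mul_le_mul_left _ h
    omega
  have hlo : i % e < e := Nat.mod_lt _ he
  have : chg i e P c < e * P * (i / e / P) + e * P := by
    rw [h1]
    have : c * e + i % e < e * P := by
      calc c * e + i % e < c * e + e := by omega
      _ = (c + 1) * e := by ring
      _ ≤ P * e := Nat.mul_le_mul_right e (by omega)
      _ = e * P := Nat.mul_comm _ _
    omega
  calc chg i e P c < e * P * (i / e / P) + e * P := this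
  _ = e * P * (i / e / P + 1) := by ring
  _ ≤ e * P * t := Nat.mul_le_mul_left _ (by omega)

lemma chg_digit (i e P c : ℕ) (he : 0 < e) (hc : c < P) :
    chg i e P c / e % P = c := by
  obtain ⟨h1, -⟩ := chg_eq i e P c he
  have hlo : i % e < e := Nat.mod_lt _ he
  have : chg i e P c = e * (P * (i / e / P) + c) + i % e := by rw [h1]; ring
  rw [this, Nat.mul_add_div he, Nat.div_eq_of_lt hlo, Nat.add_zero,
    Nat.mul_add_mod, Nat.mod_eq_of_lt hc]

lemma chg_mod_e (i e P c : ℕ) (he : 0 < e) : chg i e P c % e = i % e := by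
  obtain ⟨h1, -⟩ := chg_eq i e P c he
  have hlo : i % e < e := Nat.mod_lt _ he
  have : chg i e P c = e * (P * (i / e / P) + c) + i % e := by rw [h1]; ring
  rw [this, Nat.mul_add_mod, Nat.mod_eq_of_lt hlo]

/-- digits at lower positions are unchanged -/
lemma chg_low (i e P c e₂ P₂ : ℕ) (he : 0 < e) (hd : e₂ * P₂ ∣ e) :
    chg i e P c / e₂ % P₂ = i / e₂ % P₂ := by
  have key : ∀ x : ℕ, x / e₂ % P₂ = x % (e₂ * P₂) / e₂ := fun x =>
    (Nat.mod_mul_right_div_self x e₂ P₂).symm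
  rw [key, key, ← Nat.mod_mod_of_dvd (chg i e P c) hd, ← Nat.mod_mod_of_dvd i hd,
    chg_mod_e i e P c he]

/-- everything from position `e*P` up is unchanged -/
lemma chg_high_div (i e P c e₂ : ℕ) (he : 0 < e) (hP : 0 < P) (hc : c < P)
    (hd : e * P ∣ e₂) : chg i e P c / e₂ = i / e₂ := by
  obtain ⟨t, rfl⟩ := hd
  obtain ⟨h1, h2⟩ := chg_eq i e P c he
  have hlo : i % e < e := Nat.mod_lt _ he
  have hcb : c * e + i % e < e * P := by
    calc c * e + i % e < (c+1) * e := by rw [add_one_mul]; omega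
    _ ≤ P * e := Nat.mul_le_mul_right e (by omega)
    _ = e * P := Nat.mul_comm _ _
  have hib : (i / e % P) * e + i % e < e * P := by
    have := Nat.mod_lt (i/e) hP
    calc (i / e % P) * e + i % e < (i / e % P + 1) * e := by rw [add_one_mul]; omega
    _ ≤ P * e := Nat.mul_le_mul_right e (by omega)
    _ = e * P := Nat.mul_comm _ _
  have d1 : chg i e P c / (e * P) = i / e / P := by
    rw [h1, Nat.add_assoc, Nat.mul_add_div (Nat.mul_pos he hP), Nat.div_eq_of_lt hcb,
      Nat.add_zero]
  have d2 : i / (e * P) = i / e / P := by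
    conv_lhs => rw [h2]
    rw [Nat.add_assoc, Nat.mul_add_div (Nat.mul_pos he hP), Nat.div_eq_of_lt hib,
      Nat.add_zero]
  calc chg i e P c / (e * P * t) = chg i e P c / (e * P) / t :=
        (Nat.div_div_eq_div_mul _ _ _).symm
  _ = i / (e * P) / t := by rw [d1, d2]
  _ = i / (e * P * t) := Nat.div_div_eq_div_mul _ _ _

section ctx
variable {k : ℕ} (p m : Fin k → ℕ)

def Qv (α : Fin k) : ℕ := ∏ β ∈ Finset.Iio α, p β ^ m β
def een (α : Fin k) (t : ℕ) : ℕ := p α ^ (t-1) * Qv p m α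
def dnn (i : ℕ) (α : Fin k) (t : ℕ) : ℕ := i / een p m α t % p α
def cpv (i : ℕ) (α : Fin k) : ℕ := i / Qv p m α % p α ^ m α
def Lv : ℕ := ∏ α, p α ^ m α

lemma Qv_pos (hp : ∀ α, 0 < p α) : ∀ α, 0 < Qv p m α := fun α =>
  Finset.prod_pos (fun β _ => pow_pos (hp β) _)

lemma een_pos (hp : ∀ α, 0 < p α) : ∀ α t, 0 < een p m α t := fun α t =>
  Nat.mul_pos (pow_pos (hp α) _) (Qv_pos p m hp α)

lemma Lv_pos (hp : ∀ α, 0 < p α) : 0 < Lv p m := Finset.prod_pos (fun β _ => pow_pos (hp β) _)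

lemma prod_Iic (α : Fin k) :
    ∏ β ∈ Finset.Iic α, p β ^ m β = p α ^ m α * Qv p m α := by
  have h : Finset.Iic α = insert α (Finset.Iio α) := by
    ext β; simp [Finset.mem_Iic, Finset.mem_Iio, Finset.mem_insert]
  rw [h, Finset.prod_insert (by simp), Qv]

lemma pow_Qv_dvd (α : Fin k) (t : ℕ) (ht : t ≤ m α) :
    p α ^ t * Qv p m α ∣ ∏ β ∈ Finset.Iic α, p β ^ m β := by
  rw [prod_Iic]
  exact mul_dvd_mul (pow_dvd_pow _ ht) dvd_rfl

lemma Iic_prod_dvd_L (α : Fin k) :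
    ∏ β ∈ Finset.Iic α, p β ^ m β ∣ Lv p m :=
  Finset.prod_dvd_prod_of_subset _ _ _ (Finset.subset_univ _)

lemma Iic_prod_dvd_Qv {α β : Fin k} (h : β < α) :
    ∏ δ ∈ Finset.Iic β, p δ ^ m δ ∣ Qv p m α :=
  Finset.prod_dvd_prod_of_subset _ _ _ (fun δ hδ =>
    Finset.mem_Iio.mpr (lt_of_le_of_lt (Finset.mem_Iic.mp hδ) h))

/-- place value of digit `(α,t)` (times radix) divides `L` -/
lemma een_mul_dvd_L (α : Fin k) (t : ℕ) (ht1 : 1 ≤ t) (ht : t ≤ m α) :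
    een p m α t * p α ∣ Lv p m := by
  have : een p m α t * p α = p α ^ t * Qv p m α := by
    rw [een]
    have : p α ^ (t-1) * p α = p α ^ t := by
      rw [← pow_succ]
      congr 1
      omega
    rw [mul_right_comm, this]
  rw [this]
  exact dvd_trans (pow_Qv_dvd p m α t ht) (Iic_prod_dvd_L p m α)

lemma dnn_lt (hp : ∀ α, 0 < p α) (i : ℕ) (α : Fin k) (t : ℕ) :
    dnn p m i α t < p α := Nat.mod_lt _ (hp α)

/-- the flat digit equals the nested digit from `digv` -/
lemma dnn_eq_nested (hp : ∀ α, 0 < p α) (hm : ∀ α, 1 ≤ m α) (i : ℕ) (α : Fin k)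
    (t : ℕ) (ht : t ≤ m α) :
    (i / Qv p m α % p α ^ m α) / p α ^ (t-1) % p α = dnn p m i α t := by
  have hdvd : p α ^ (t-1) * p α ∣ p α ^ m α := by
    have : p α ^ (t-1) * p α = p α ^ (t-1+1) := (pow_succ _ _).symm
    rw [this]
    exact pow_dvd_pow _ (by have := hm α; omega)
  have key : ∀ x : ℕ, x / p α ^ (t-1) % p α = x % (p α ^ (t-1) * p α) / p α ^ (t-1) :=
    fun x => (Nat.mod_mul_right_div_self x _ _).symm
  have hd : dnn p m i α t = i / Qv p m α / p α ^ (t-1) % p α := by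
    rw [dnn, een, mul_comm, ← Nat.div_div_eq_div_mul]
  rw [hd, key (i / Qv p m α % p α ^ m α), Nat.mod_mod_of_dvd _ hdvd,
    ← key (i / Qv p m α)]

/-- a number `< P^mm` is determined by its base-`P` digits -/
lemma digits_inj_s3 (P : ℕ) (hP : 0 < P) :
    ∀ mm x y, x < P ^ mm → y < P ^ mm → (∀ s < mm, x / P ^ s % P = y / P ^ s % P) →
      x = y := by
  intro mm
  induction mm with
  | zero => intro x y hx hy _; simp at hx hy; omega
  | succ n ih =>
    intro x y hx hy h
    have h0 : x % P = y % P := by have := h 0 (by omega); simpa using this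
    have hx' : x / P < P ^ n := by
      rw [Nat.div_lt_iff_lt_mul hP, ← pow_succ]; exact hx
    have hy' : y / P < P ^ n := by
      rw [Nat.div_lt_iff_lt_mul hP, ← pow_succ]; exact hy
    have h' : ∀ s < n, x / P / P ^ s % P = y / P / P ^ s % P := by
      intro s hs
      have := h (s+1) (by omega)
      rwa [pow_succ', ← Nat.div_div_eq_div_mul, ← Nat.div_div_eq_div_mul] at this
    have heq := ih (x / P) (y / P) hx' hy' h'
    calc x = P * (x / P) + x % P := (Nat.div_add_mod x P).symm
    _ = P * (y / P) + y % P := by rw [heq, h0]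
    _ = y := Nat.div_add_mod y P

/-- a number `< L` is determined by its components -/
lemma comps_inj (hp : ∀ α, 0 < p α) (i j : ℕ) (hi : i < Lv p m) (hj : j < Lv p m)
    (h : ∀ α, cpv p m i α = cpv p m j α) : i = j := by
  have key : ∀ n, n ≤ k →
      i % (∏ β ∈ Finset.univ.filter (fun β : Fin k => (β : ℕ) < n), p β ^ m β)
        = j % (∏ β ∈ Finset.univ.filter (fun β : Fin k => (β : ℕ) < n), p β ^ m β) := by
    intro n
    induction n with
    | zero =>
      intro _
      have h0 : (Finset.univ.filter (fun β : Fin k => (β : ℕ) < 0)) = ∅ := by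
        ext β; simp
      rw [h0, Finset.prod_empty, Nat.mod_one, Nat.mod_one]
    | succ n ih =>
      intro hn
      have hnk : n < k := hn
      set A : Fin k := ⟨n, hnk⟩ with hA
      have hQ : Qv p m A = ∏ β ∈ Finset.univ.filter (fun β : Fin k => (β : ℕ) < n), p β ^ m β := by
        rw [Qv]
        congr 1
        ext β
        simp only [Finset.mem_Iio, Finset.mem_filter, Finset.mem_univ, true_and, Fin.lt_def, hA, Fin.val_mk]
      have hset : Finset.univ.filter (fun β : Fin k => (β : ℕ) < n + 1)
          = insert A (Finset.univ.filter (fun β : Fin k => (β : ℕ) < n)) := by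
        ext β
        simp only [Finset.mem_filter, Finset.mem_univ, true_and, Finset.mem_insert]
        constructor
        · intro hb
          rcases Nat.lt_succ_iff_lt_or_eq.mp hb with h' | h'
          · exact Or.inr h'
          · exact Or.inl (Fin.ext h')
        · rintro (rfl | hb)
          · simp [hA]
          · omega
      have hAnot : A ∉ Finset.univ.filter (fun β : Fin k => (β : ℕ) < n) := by simp [hA]
      rw [hset, Finset.prod_insert hAnot, ← hQ]
      have ihh := ih (by omega)
      rw [← hQ] at ihh
      have decomp : ∀ x : ℕ, x % (p A ^ m A * Qv p m A)
          = Qv p m A * (cpv p m x A) + x % Qv p m A := by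
        intro x
        have h1 := Nat.div_add_mod (x % (Qv p m A * p A ^ m A)) (Qv p m A)
        rw [Nat.mod_mul_right_div_self, Nat.mod_mod_of_dvd _ (Dvd.intro _ rfl)] at h1
        rw [mul_comm (p A ^ m A)]
        rw [← h1, cpv]
      rw [decomp i, decomp j, h A, ihh]
  have hfin := key k le_rfl
  have : Finset.univ.filter (fun β : Fin k => (β : ℕ) < k) = Finset.univ := by
    ext β; simp [β.isLt]
  rw [this] at hfin
  have hL : (∏ β, p β ^ m β) = Lv p m := rfl
  rw [hL, Nat.mod_eq_of_lt hi, Nat.mod_eq_of_lt hj] at hfin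
  exact hfin

/-- modify digit `(α,t)` of `i` to value `c` -/
def mdf (i : ℕ) (α : Fin k) (t c : ℕ) : ℕ := chg i (een p m α t) (p α) c

lemma mdf_eq (i : ℕ) (α : Fin k) (t c : ℕ) :
    mdf p m i α t c = i - dnn p m i α t * een p m α t + c * een p m α t := rfl

lemma dnn_mul_een_le (i : ℕ) (α : Fin k) (t : ℕ) :
    dnn p m i α t * een p m α t ≤ i := chg_le i _ _

lemma mdf_lt (hp : ∀ α, 0 < p α) (i : ℕ) (α : Fin k) (t c : ℕ)
    (hi : i < Lv p m) (ht1 : 1 ≤ t) (ht : t ≤ m α) (hc : c < p α) :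
    mdf p m i α t c < Lv p m :=
  chg_lt _ _ _ _ _ (een_pos p m hp α t) (hp α) (een_mul_dvd_L p m α t ht1 ht) hi hc

lemma mdf_digit (hp : ∀ α, 0 < p α) (i : ℕ) (α : Fin k) (t c : ℕ) (hc : c < p α) :
    dnn p m (mdf p m i α t c) α t = c :=
  chg_digit _ _ _ _ (een_pos p m hp α t) hc

lemma Qv_dvd_een (α : Fin k) (t : ℕ) : Qv p m α ∣ een p m α t := dvd_mul_left _ _

lemma een_mul_self (α : Fin k) (t : ℕ) (ht1 : 1 ≤ t) :
    een p m α t * p α = p α ^ t * Qv p m α := by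
  rw [een, mul_right_comm, ← pow_succ]
  congr 2
  omega

/-- digits at other positions are unchanged by `mdf` -/
lemma mdf_other (hp : ∀ α, 0 < p α) (i : ℕ) (α : Fin k) (t c : ℕ)
    (ht1 : 1 ≤ t) (ht : t ≤ m α) (hc : c < p α)
    (β : Fin k) (s : ℕ) (hs1 : 1 ≤ s) (hs : s ≤ m β)
    (hne : β ≠ α ∨ s ≠ t) :
    dnn p m (mdf p m i α t c) β s = dnn p m i β s := by
  rcases eq_or_ne β α with rfl | hba
  · have hst : s ≠ t := by tauto
    rcases lt_or_gt_of_ne hst with hlt | hgt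
    · -- lower digit
      refine chg_low _ _ _ _ _ _ (een_pos p m hp β t) ?_
      rw [een_mul_self p m β s hs1, een]
      exact mul_dvd_mul (pow_dvd_pow _ (by omega)) dvd_rfl
    · -- higher digit
      have hdiv : mdf p m i β t c / een p m β s = i / een p m β s := by
        refine chg_high_div _ _ _ _ _ (een_pos p m hp β t) (hp β) hc ?_
        rw [een_mul_self p m β t ht1, een]
        exact mul_dvd_mul (pow_dvd_pow _ (by omega)) dvd_rfl
      rw [dnn, dnn, hdiv]
  · rcases lt_or_gt_of_ne hba with hlt | hgt
    · -- β < α : lower digit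
      refine chg_low _ _ _ _ _ _ (een_pos p m hp α t) ?_
      calc een p m β s * p β = p β ^ s * Qv p m β := een_mul_self p m β s hs1
      _ ∣ ∏ δ ∈ Finset.Iic β, p δ ^ m δ := pow_Qv_dvd p m β s hs
      _ ∣ Qv p m α := Iic_prod_dvd_Qv p m hlt
      _ ∣ een p m α t := Qv_dvd_een p m α t
    · -- β > α : higher digit
      have hdiv : mdf p m i α t c / een p m β s = i / een p m β s := by
        refine chg_high_div _ _ _ _ _ (een_pos p m hp α t) (hp α) hc ?_
        calc een p m α t * p α = p α ^ t * Qv p m α := een_mul_self p m α t ht1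
        _ ∣ ∏ δ ∈ Finset.Iic α, p δ ^ m δ := pow_Qv_dvd p m α t ht
        _ ∣ Qv p m β := Iic_prod_dvd_Qv p m hgt
        _ ∣ een p m β s := Qv_dvd_een p m β s
      rw [dnn, dnn, hdiv]

/-- components other than `α` are unchanged by `mdf` -/
lemma mdf_cpv_other (hp : ∀ α, 0 < p α) (i : ℕ) (α : Fin k) (t c : ℕ)
    (ht1 : 1 ≤ t) (ht : t ≤ m α) (hc : c < p α)
    (β : Fin k) (hba : β ≠ α) :
    cpv p m (mdf p m i α t c) β = cpv p m i β := by
  rcases lt_or_gt_of_ne hba with hlt | hgt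
  · refine chg_low _ _ _ _ _ _ (een_pos p m hp α t) ?_
    calc Qv p m β * p β ^ m β = p β ^ m β * Qv p m β := mul_comm _ _
    _ ∣ ∏ δ ∈ Finset.Iic β, p δ ^ m δ := pow_Qv_dvd p m β (m β) le_rfl
    _ ∣ Qv p m α := Iic_prod_dvd_Qv p m hlt
    _ ∣ een p m α t := Qv_dvd_een p m α t
  · have hdiv : mdf p m i α t c / Qv p m β = i / Qv p m β := by
      refine chg_high_div _ _ _ _ _ (een_pos p m hp α t) (hp α) hc ?_
      calc een p m α t * p α = p α ^ t * Qv p m α := een_mul_self p m α t ht1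
      _ ∣ ∏ δ ∈ Finset.Iic α, p δ ^ m δ := pow_Qv_dvd p m α t ht
      _ ∣ Qv p m β := Iic_prod_dvd_Qv p m hgt
    rw [cpv, cpv, hdiv]

lemma dnn_eq_of_cpv_eq (hp : ∀ α, 0 < p α) (hm : ∀ α, 1 ≤ m α) (i j : ℕ) (α : Fin k)
    (h : cpv p m i α = cpv p m j α) (t : ℕ) (ht : t ≤ m α) :
    dnn p m i α t = dnn p m j α t := by
  rw [← dnn_eq_nested p m hp hm i α t ht, ← dnn_eq_nested p m hp hm j α t ht]
  rw [cpv] at h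
  rw [h]
  rfl

lemma cpv_eq_of_dnn_eq (hp : ∀ α, 0 < p α) (hm : ∀ α, 1 ≤ m α) (i j : ℕ) (α : Fin k)
    (h : ∀ t, 1 ≤ t → t ≤ m α → dnn p m i α t = dnn p m j α t) :
    cpv p m i α = cpv p m j α := by
  refine digits_inj_s3 (p α) (hp α) (m α) _ _ (Nat.mod_lt _ (pow_pos (hp α) _))
    (Nat.mod_lt _ (pow_pos (hp α) _)) ?_
  intro s hs
  have h1 := dnn_eq_nested p m hp hm i α (s+1) (by omega)
  have h2 := dnn_eq_nested p m hp hm j α (s+1) (by omega)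
  simp only [Nat.add_sub_cancel] at h1 h2
  rw [cpv, cpv, h1, h2]
  exact h (s+1) (by omega) (by omega)

def Asel (hk : 1 ≤ k) (τ i : ℕ) : Fin k :=
  if h : (Finset.univ.filter fun α => cpv p m i α ≠ cpv p m (i+τ) α).Nonempty
  then (Finset.univ.filter fun α => cpv p m i α ≠ cpv p m (i+τ) α).min' h
  else ⟨0, hk⟩

def Tsel (π : Fin k → Equiv.Perm ℕ) (hk : 1 ≤ k) (τ i : ℕ) : ℕ :=
  if h : ((Finset.Icc 1 (m (Asel p m hk τ i))).filter fun t =>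
      dnn p m i (Asel p m hk τ i) (π (Asel p m hk τ i) t)
        ≠ dnn p m (i+τ) (Asel p m hk τ i) (π (Asel p m hk τ i) t)).Nonempty
  then ((Finset.Icc 1 (m (Asel p m hk τ i))).filter fun t =>
      dnn p m i (Asel p m hk τ i) (π (Asel p m hk τ i) t)
        ≠ dnn p m (i+τ) (Asel p m hk τ i) (π (Asel p m hk τ i) t)).min' h
  else 0

def keyf (π : Fin k → Equiv.Perm ℕ) (hk : 1 ≤ k) (τ i : ℕ) : ℕ × Fin k × ℕ :=
  (i - dnn p m i (Asel p m hk τ i)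
        (π (Asel p m hk τ i) (Tsel p m π hk τ i - 1))
      * een p m (Asel p m hk τ i) (π (Asel p m hk τ i) (Tsel p m π hk τ i - 1)),
   Asel p m hk τ i, Tsel p m π hk τ i)

lemma pi_image (π : Fin k → Equiv.Perm ℕ)
    (hπ : ∀ α, ∀ i ∈ Finset.Icc 1 (m α), (π α) i ∈ Finset.Icc 1 (m α)) (α : Fin k) :
    (Finset.Icc 1 (m α)).image (π α) = Finset.Icc 1 (m α) := by
  refine Finset.eq_of_subset_of_card_le ?_ ?_
  · intro x hx
    rw [Finset.mem_image] at hx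
    obtain ⟨t, ht, rfl⟩ := hx
    exact hπ α t ht
  · rw [Finset.card_image_of_injective _ (π α).injective]

lemma sel_spec (hp : ∀ α, 0 < p α) (hm : ∀ α, 1 ≤ m α) (hk : 1 ≤ k)
    (π : Fin k → Equiv.Perm ℕ)
    (hπ : ∀ α, ∀ i ∈ Finset.Icc 1 (m α), (π α) i ∈ Finset.Icc 1 (m α))
    (τ i : ℕ) (hτ : 0 < τ) (hij : i + τ < Lv p m)
    (H1 : ∀ α, dnn p m i α (π α 1) = dnn p m (i+τ) α (π α 1)) :
    (∀ β, β < Asel p m hk τ i → cpv p m i β = cpv p m (i+τ) β) ∧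
    cpv p m i (Asel p m hk τ i) ≠ cpv p m (i+τ) (Asel p m hk τ i) ∧
    2 ≤ Tsel p m π hk τ i ∧ Tsel p m π hk τ i ≤ m (Asel p m hk τ i) ∧
    dnn p m i (Asel p m hk τ i) (π (Asel p m hk τ i) (Tsel p m π hk τ i))
      ≠ dnn p m (i+τ) (Asel p m hk τ i) (π (Asel p m hk τ i) (Tsel p m π hk τ i)) ∧
    (∀ t, 1 ≤ t → t < Tsel p m π hk τ i →
      dnn p m i (Asel p m hk τ i) (π (Asel p m hk τ i) t)
        = dnn p m (i+τ) (Asel p m hk τ i) (π (Asel p m hk τ i) t)) := by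
  have hij' : i ≠ i + τ := by omega
  have hi : i < Lv p m := by omega
  set sA := Finset.univ.filter fun α => cpv p m i α ≠ cpv p m (i+τ) α with hsA
  have hAne : sA.Nonempty := by
    by_contra h
    rw [Finset.not_nonempty_iff_eq_empty] at h
    apply hij'
    refine comps_inj p m hp i (i+τ) hi hij fun α => ?_
    by_contra hcc
    have : α ∈ sA := by rw [hsA]; simp [hcc]
    rw [h] at this
    exact absurd this (Finset.notMem_empty α)
  have hAdef : Asel p m hk τ i = sA.min' hAne := by rw [Asel, dif_pos hAne]
  set A := Asel p m hk τ i with hA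
  have hAmem : A ∈ sA := by rw [hAdef]; exact Finset.min'_mem _ _
  have hAne' : cpv p m i A ≠ cpv p m (i+τ) A := by
    rw [hsA] at hAmem; simpa using hAmem
  have hAmin : ∀ β, β < A → cpv p m i β = cpv p m (i+τ) β := by
    intro β hβ
    by_contra hcc
    have : β ∈ sA := by rw [hsA]; simp [hcc]
    have := Finset.min'_le _ _ this
    rw [← hAdef] at this
    exact absurd hβ (not_lt.mpr this)
  set sT := (Finset.Icc 1 (m A)).filter fun t =>
      dnn p m i A (π A t) ≠ dnn p m (i+τ) A (π A t) with hsT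
  have hTne : sT.Nonempty := by
    by_contra h
    rw [Finset.not_nonempty_iff_eq_empty] at h
    apply hAne'
    refine cpv_eq_of_dnn_eq p m hp hm i (i+τ) A fun s hs1 hs2 => ?_
    have hsmem : s ∈ Finset.Icc 1 (m A) := Finset.mem_Icc.mpr ⟨hs1, hs2⟩
    rw [← pi_image m π hπ A, Finset.mem_image] at hsmem
    obtain ⟨t, ht, rfl⟩ := hsmem
    by_contra hcc
    have : t ∈ sT := by rw [hsT]; exact Finset.mem_filter.mpr ⟨ht, hcc⟩
    rw [h] at this
    exact absurd this (Finset.notMem_empty t)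
  have hTdef : Tsel p m π hk τ i = sT.min' hTne := by rw [Tsel, dif_pos hTne]
  set T := Tsel p m π hk τ i with hT
  have hTmem : T ∈ sT := by rw [hTdef]; exact Finset.min'_mem _ _
  rw [hsT, Finset.mem_filter, Finset.mem_Icc] at hTmem
  have hTmin : ∀ t, 1 ≤ t → t < T →
      dnn p m i A (π A t) = dnn p m (i+τ) A (π A t) := by
    intro t ht1 ht2
    by_contra hcc
    rcases le_or_gt t (m A) with htm | htm
    · have : t ∈ sT := by
        rw [hsT]; exact Finset.mem_filter.mpr ⟨Finset.mem_Icc.mpr ⟨ht1, htm⟩, hcc⟩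
      have := Finset.min'_le _ _ this
      rw [← hTdef] at this
      omega
    · omega
  have hT1 : T ≠ 1 := by
    intro h1
    exact hTmem.2 (by rw [h1]; exact H1 A)
  exact ⟨hAmin, hAne', by omega, hTmem.1.2, hTmem.2, hTmin⟩
lemma fiber_invar (hp : ∀ α, 0 < p α) (hm : ∀ α, 1 ≤ m α) (hk : 1 ≤ k)
    (π : Fin k → Equiv.Perm ℕ)
    (hπ : ∀ α, ∀ i ∈ Finset.Icc 1 (m α), (π α) i ∈ Finset.Icc 1 (m α))
    (τ i : ℕ) (hτ : 0 < τ) (hij : i + τ < Lv p m)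
    (H1 : ∀ α, dnn p m i α (π α 1) = dnn p m (i+τ) α (π α 1))
    (c : ℕ) (hc : c < p (Asel p m hk τ i)) :
    mdf p m i (Asel p m hk τ i) (π (Asel p m hk τ i) (Tsel p m π hk τ i - 1)) c + τ
        < Lv p m ∧
    mdf p m i (Asel p m hk τ i) (π (Asel p m hk τ i) (Tsel p m π hk τ i - 1)) c + τ
        = mdf p m (i+τ) (Asel p m hk τ i) (π (Asel p m hk τ i) (Tsel p m π hk τ i - 1)) c ∧
    (∀ α, dnn p m (mdf p m i (Asel p m hk τ i) (π (Asel p m hk τ i) (Tsel p m π hk τ i - 1)) c) α (π α 1)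
        = dnn p m (mdf p m i (Asel p m hk τ i) (π (Asel p m hk τ i) (Tsel p m π hk τ i - 1)) c + τ) α (π α 1)) ∧
    keyf p m π hk τ (mdf p m i (Asel p m hk τ i) (π (Asel p m hk τ i) (Tsel p m π hk τ i - 1)) c)
        = keyf p m π hk τ i := by
  obtain ⟨hcomplow, hcompA, hT2, hTm, hdT, hlow⟩ :=
    sel_spec p m hp hm hk π hπ τ i hτ hij H1
  set A := Asel p m hk τ i with hA
  set T := Tsel p m π hk τ i with hT
  set r := π A (T - 1) with hr
  set j := i + τ with hj
  have hrIcc : r ∈ Finset.Icc 1 (m A) := hπ A (T-1) (Finset.mem_Icc.mpr ⟨by omega, by omega⟩)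
  have hr1 : 1 ≤ r := (Finset.mem_Icc.mp hrIcc).1
  have hrm : r ≤ m A := (Finset.mem_Icc.mp hrIcc).2
  set e := een p m A r with he
  set u := dnn p m i A r with hu
  have hujr : dnn p m j A r = u := (hlow (T-1) (by omega) (by omega)).symm
  set ic := mdf p m i A r c with hic
  set jc := mdf p m j A r c with hjc
  have hue : u * e ≤ i := dnn_mul_een_le p m i A r
  have huej : u * e ≤ j := by omega
  have hicj : ic + τ = jc := by
    rw [hic, hjc, mdf_eq, mdf_eq, hujr, ← hu, ← he]
    omega
  have hjcL : jc < Lv p m := mdf_lt p m hp j A r c hij hr1 hrm hc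
  have hicL : ic + τ < Lv p m := by omega
  -- π A T ≠ r and its bounds
  have hTIcc : π A T ∈ Finset.Icc 1 (m A) := hπ A T (Finset.mem_Icc.mpr ⟨by omega, hTm⟩)
  have hTr : π A T ≠ r := fun h => by
    have := (π A).injective h
    omega
  -- digits of ic and jc
  have hdic : ∀ (β : Fin k) (s : ℕ), 1 ≤ s → s ≤ m β → (β ≠ A ∨ s ≠ r) →
      dnn p m ic β s = dnn p m i β s := fun β s h1 h2 h3 =>
    mdf_other p m hp i A r c hr1 hrm hc β s h1 h2 h3
  have hdjc : ∀ (β : Fin k) (s : ℕ), 1 ≤ s → s ≤ m β → (β ≠ A ∨ s ≠ r) →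
      dnn p m jc β s = dnn p m j β s := fun β s h1 h2 h3 =>
    mdf_other p m hp j A r c hr1 hrm hc β s h1 h2 h3
  have hdicr : dnn p m ic A r = c := mdf_digit p m hp i A r c hc
  have hdjcr : dnn p m jc A r = c := mdf_digit p m hp j A r c hc
  -- S-condition for ic
  have hS : ∀ α, dnn p m ic α (π α 1) = dnn p m (ic + τ) α (π α 1) := by
    intro α
    rw [hicj]
    have h1Icc : π α 1 ∈ Finset.Icc 1 (m α) :=
      hπ α 1 (Finset.mem_Icc.mpr ⟨le_rfl, hm α⟩)
    have hb1 := (Finset.mem_Icc.mp h1Icc).1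
    have hb2 := (Finset.mem_Icc.mp h1Icc).2
    rcases eq_or_ne α A with hα | hα
    · rw [hα] at hb1 hb2 ⊢
      rcases eq_or_ne (π A 1) r with hpr | hpr
      · rw [hpr, hdicr, hdjcr]
      · rw [hdic A _ hb1 hb2 (Or.inr hpr), hdjc A _ hb1 hb2 (Or.inr hpr)]
        exact H1 A
    · rw [hdic α _ hb1 hb2 (Or.inl hα), hdjc α _ hb1 hb2 (Or.inl hα)]
      exact H1 α
  refine ⟨hicL, hicj, hS, ?_⟩
  -- components of ic, jc
  have hciclow : ∀ β, β ≠ A → cpv p m ic β = cpv p m i β := fun β hβ =>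
    mdf_cpv_other p m hp i A r c hr1 hrm hc β hβ
  have hcjclow : ∀ β, β ≠ A → cpv p m jc β = cpv p m j β := fun β hβ =>
    mdf_cpv_other p m hp j A r c hr1 hrm hc β hβ
  have hcompAc : cpv p m ic A ≠ cpv p m jc A := by
    intro hcc
    apply hdT
    have h1 := dnn_eq_of_cpv_eq p m hp hm ic jc A hcc (π A T) (Finset.mem_Icc.mp hTIcc).2
    rw [hdic A _ (Finset.mem_Icc.mp hTIcc).1 (Finset.mem_Icc.mp hTIcc).2 (Or.inr hTr),
      hdjc A _ (Finset.mem_Icc.mp hTIcc).1 (Finset.mem_Icc.mp hTIcc).2 (Or.inr hTr)] at h1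
    exact h1
  -- Asel of ic
  set sA' := Finset.univ.filter (fun α => cpv p m ic α ≠ cpv p m (ic + τ) α) with hsA'
  have hAmem' : A ∈ sA' := by
    rw [hsA', Finset.mem_filter]
    refine ⟨Finset.mem_univ _, ?_⟩
    rw [hicj]
    exact hcompAc
  have hAne' : sA'.Nonempty := ⟨A, hAmem'⟩
  have hAic : Asel p m hk τ ic = A := by
    rw [Asel, dif_pos hAne']
    refine le_antisymm (Finset.min'_le _ _ hAmem') (Finset.le_min' _ _ _ ?_)
    intro β hβ
    by_contra hgt
    push_neg at hgt
    rw [← hsA'] at hβ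
    rw [hsA', Finset.mem_filter] at hβ
    apply hβ.2
    rw [hicj, hciclow β (ne_of_lt hgt), hcjclow β (ne_of_lt hgt)]
    exact hcomplow β hgt
  -- Tsel of ic
  set sT' := (Finset.Icc 1 (m A)).filter (fun t =>
      dnn p m ic A (π A t) ≠ dnn p m (ic + τ) A (π A t)) with hsT'
  have hTmem' : T ∈ sT' := by
    rw [hsT', Finset.mem_filter]
    refine ⟨Finset.mem_Icc.mpr ⟨by omega, hTm⟩, ?_⟩
    rw [hicj, hdic A _ (Finset.mem_Icc.mp hTIcc).1 (Finset.mem_Icc.mp hTIcc).2 (Or.inr hTr),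
      hdjc A _ (Finset.mem_Icc.mp hTIcc).1 (Finset.mem_Icc.mp hTIcc).2 (Or.inr hTr)]
    exact hdT
  have hTne' : sT'.Nonempty := ⟨T, hTmem'⟩
  have hTic : Tsel p m π hk τ ic = T := by
    rw [Tsel]
    simp only [hAic]
    rw [dif_pos hTne']
    refine le_antisymm (Finset.min'_le _ _ hTmem') (Finset.le_min' _ _ _ ?_)
    intro t ht
    by_contra hgt
    push_neg at hgt
    rw [← hsT'] at ht
    rw [hsT', Finset.mem_filter, Finset.mem_Icc] at ht
    apply ht.2
    have ht1 : 1 ≤ t := ht.1.1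
    have htIcc : π A t ∈ Finset.Icc 1 (m A) := hπ A t (Finset.mem_Icc.mpr ht.1)
    rcases eq_or_ne (π A t) r with hpr | hpr
    · rw [hicj, hpr, hdicr, hdjcr]
    · rw [hicj, hdic A _ (Finset.mem_Icc.mp htIcc).1 (Finset.mem_Icc.mp htIcc).2 (Or.inr hpr),
        hdjc A _ (Finset.mem_Icc.mp htIcc).1 (Finset.mem_Icc.mp htIcc).2 (Or.inr hpr)]
      exact hlow t ht1 hgt
  -- key equality
  have hcele : c * e ≤ ic := by
    rw [hic, mdf_eq, ← hu, ← he]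
    omega
  have hfirst : ic - dnn p m ic A r * e = i - u * e := by
    rw [hdicr, hic, mdf_eq, ← hu, ← he]
    omega
  rw [keyf, keyf, hAic, hTic, ← hA, ← hT, ← hr, ← he, hfirst]
def dz (i : ℕ) (α : Fin k) (t : ℕ) : ℤ := (dnn p m i α t : ℤ)

def FZ (lam : ℕ) (π : Fin k → Equiv.Perm ℕ) (g : Fin k → ℕ → ZMod lam)
    (g₀ : Fin k → ZMod lam) (i : ℕ) : ℤ :=
  ∑ α, (((lam / p α : ℕ) : ℤ) *
      (∑ s ∈ Finset.Ico 1 (m α), dz p m i α (π α s) * dz p m i α (π α (s+1)))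
    + ∑ s ∈ Finset.Icc 1 (m α), ((g α s).val : ℤ) * dz p m i α s + ((g₀ α).val : ℤ))

lemma FZ_affine (hp : ∀ α, 0 < p α) (hm : ∀ α, 1 ≤ m α)
    (lam : ℕ) (π : Fin k → Equiv.Perm ℕ)
    (hπ : ∀ α, ∀ i ∈ Finset.Icc 1 (m α), (π α) i ∈ Finset.Icc 1 (m α))
    (g : Fin k → ℕ → ZMod lam) (g₀ : Fin k → ZMod lam)
    (A : Fin k) (T : ℕ) (hT2 : 2 ≤ T) (hTm : T ≤ m A)
    (x : ℕ) (hx : x < Lv p m) (hx0 : dnn p m x A (π A (T-1)) = 0)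
    (c : ℕ) (hc : c < p A) :
    FZ p m lam π g g₀ (x + c * een p m A (π A (T-1)))
      = FZ p m lam π g g₀ x + c *
        (((lam / p A : ℕ) : ℤ) *
          ((if 3 ≤ T then dz p m x A (π A (T-2)) else 0) + dz p m x A (π A T))
        + ((g A (π A (T-1))).val : ℤ)) := by
  set r := π A (T-1) with hr
  have hrIcc : r ∈ Finset.Icc 1 (m A) := hπ A (T-1) (Finset.mem_Icc.mpr ⟨by omega, by omega⟩)
  have hr1 : 1 ≤ r := (Finset.mem_Icc.mp hrIcc).1
  have hrm : r ≤ m A := (Finset.mem_Icc.mp hrIcc).2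
  have hxc : x + c * een p m A r = mdf p m x A r c := by
    rw [mdf_eq, hx0]
    omega
  set x' := mdf p m x A r c with hx'
  rw [hxc]
  have hd : ∀ (β : Fin k) (s : ℕ), 1 ≤ s → s ≤ m β → (β ≠ A ∨ s ≠ r) →
      dz p m x' β s = dz p m x β s := by
    intro β s h1 h2 h3
    rw [dz, dz, mdf_other p m hp x A r c hr1 hrm hc β s h1 h2 h3]
  have hdr : dz p m x' A r = (c : ℤ) := by
    rw [dz, mdf_digit p m hp x A r c hc]
  have hinj : ∀ s t : ℕ, π A s = π A t ↔ s = t := fun s t =>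
    ⟨fun h => (π A).injective h, fun h => by rw [h]⟩
  have hxr : dz p m x A r = 0 := by rw [dz, hx0]; rfl
  -- quadratic difference
  have hquad : ∑ s ∈ Finset.Ico 1 (m A), dz p m x' A (π A s) * dz p m x' A (π A (s+1))
      - ∑ s ∈ Finset.Ico 1 (m A), dz p m x A (π A s) * dz p m x A (π A (s+1))
      = (c : ℤ) * ((if 3 ≤ T then dz p m x A (π A (T-2)) else 0) + dz p m x A (π A T)) := by
    rw [← Finset.sum_sub_distrib]
    have hsub : ∀ s ∈ Finset.Ico 1 (m A),
        dz p m x' A (π A s) * dz p m x' A (π A (s+1))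
        - dz p m x A (π A s) * dz p m x A (π A (s+1)) ≠ 0 → s = T-1 ∨ s = T-2 := by
      intro s hs hne
      by_contra hcon
      push_neg at hcon
      rw [Finset.mem_Ico] at hs
      have hb1 : π A s ∈ Finset.Icc 1 (m A) := hπ A s (Finset.mem_Icc.mpr ⟨hs.1, by omega⟩)
      have hb2 : π A (s+1) ∈ Finset.Icc 1 (m A) :=
        hπ A (s+1) (Finset.mem_Icc.mpr ⟨by omega, by omega⟩)
      have hne1 : π A s ≠ r := by rw [hr, Ne, hinj]; omega
      have hne2 : π A (s+1) ≠ r := by rw [hr, Ne, hinj]; omega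
      apply hne
      rw [hd A _ (Finset.mem_Icc.mp hb1).1 (Finset.mem_Icc.mp hb1).2 (Or.inr hne1),
        hd A _ (Finset.mem_Icc.mp hb2).1 (Finset.mem_Icc.mp hb2).2 (Or.inr hne2)]
      ring
    rw [← Finset.sum_filter_of_ne hsub]
    have hπT : π A T ≠ r := by rw [hr, Ne, hinj]; omega
    have hTmIcc : π A T ∈ Finset.Icc 1 (m A) := hπ A T (Finset.mem_Icc.mpr ⟨by omega, hTm⟩)
    have hvalT : dz p m x' A (π A T) = dz p m x A (π A T) :=
      hd A _ (Finset.mem_Icc.mp hTmIcc).1 (Finset.mem_Icc.mp hTmIcc).2 (Or.inr hπT)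
    have htermT1 : dz p m x' A (π A (T-1)) * dz p m x' A (π A (T-1+1))
        - dz p m x A (π A (T-1)) * dz p m x A (π A (T-1+1))
        = (c : ℤ) * dz p m x A (π A T) := by
      have hTT : T - 1 + 1 = T := by omega
      rw [hTT, ← hr, hdr, hvalT, hxr]
      ring
    rcases lt_or_ge T 3 with hT3 | hT3
    · have hfil : (Finset.Ico 1 (m A)).filter (fun s => s = T-1 ∨ s = T-2) = {T-1} := by
        ext s
        simp only [Finset.mem_filter, Finset.mem_Ico, Finset.mem_singleton]
        omega
      rw [hfil, Finset.sum_singleton, htermT1, if_neg (by omega)]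
      ring
    · have hfil : (Finset.Ico 1 (m A)).filter (fun s => s = T-1 ∨ s = T-2) = {T-2, T-1} := by
        ext s
        simp only [Finset.mem_filter, Finset.mem_Ico, Finset.mem_insert, Finset.mem_singleton]
        omega
      have hπT2 : π A (T-2) ≠ r := by rw [hr, Ne, hinj]; omega
      have hT2Icc : π A (T-2) ∈ Finset.Icc 1 (m A) :=
        hπ A (T-2) (Finset.mem_Icc.mpr ⟨by omega, by omega⟩)
      have hvalT2 : dz p m x' A (π A (T-2)) = dz p m x A (π A (T-2)) :=
        hd A _ (Finset.mem_Icc.mp hT2Icc).1 (Finset.mem_Icc.mp hT2Icc).2 (Or.inr hπT2)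
      have htermT2 : dz p m x' A (π A (T-2)) * dz p m x' A (π A (T-2+1))
          - dz p m x A (π A (T-2)) * dz p m x A (π A (T-2+1))
          = (c : ℤ) * dz p m x A (π A (T-2)) := by
        have hTT : T - 2 + 1 = T - 1 := by omega
        rw [hTT, ← hr, hdr, hvalT2, hxr]
        ring
      rw [hfil, Finset.sum_pair (by omega : T-2 ≠ T-1), htermT1, htermT2, if_pos hT3]
      ring
  -- linear difference
  have hlin : ∑ s ∈ Finset.Icc 1 (m A), ((g A s).val : ℤ) * dz p m x' A s
      - ∑ s ∈ Finset.Icc 1 (m A), ((g A s).val : ℤ) * dz p m x A s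
      = (c : ℤ) * ((g A r).val : ℤ) := by
    rw [← Finset.sum_sub_distrib]
    have hsub : ∀ s ∈ Finset.Icc 1 (m A),
        ((g A s).val : ℤ) * dz p m x' A s - ((g A s).val : ℤ) * dz p m x A s ≠ 0 →
        s = r := by
      intro s hs hne
      by_contra hcon
      apply hne
      rw [hd A s (Finset.mem_Icc.mp hs).1 (Finset.mem_Icc.mp hs).2 (Or.inr hcon)]
      ring
    rw [← Finset.sum_filter_of_ne hsub]
    have hfil : (Finset.Icc 1 (m A)).filter (fun s => s = r) = {r} := by
      ext s
      simp only [Finset.mem_filter, Finset.mem_Icc, Finset.mem_singleton]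
      constructor
      · tauto
      · intro h
        exact ⟨by omega, h⟩
    rw [hfil, Finset.sum_singleton, hdr, hxr]
    ring
  -- assemble
  rw [FZ, FZ]
  rw [← Finset.sum_add_sum_compl {A}, ← Finset.sum_add_sum_compl {A}
    (f := fun α => (((lam / p α : ℕ) : ℤ) *
      (∑ s ∈ Finset.Ico 1 (m α), dz p m x α (π α s) * dz p m x α (π α (s+1)))
    + ∑ s ∈ Finset.Icc 1 (m α), ((g α s).val : ℤ) * dz p m x α s + ((g₀ α).val : ℤ)))]
  have hcompl : ∑ α ∈ ({A} : Finset (Fin k))ᶜ,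
      (((lam / p α : ℕ) : ℤ) *
        (∑ s ∈ Finset.Ico 1 (m α), dz p m x' α (π α s) * dz p m x' α (π α (s+1)))
      + ∑ s ∈ Finset.Icc 1 (m α), ((g α s).val : ℤ) * dz p m x' α s + ((g₀ α).val : ℤ))
      = ∑ α ∈ ({A} : Finset (Fin k))ᶜ,
      (((lam / p α : ℕ) : ℤ) *
        (∑ s ∈ Finset.Ico 1 (m α), dz p m x α (π α s) * dz p m x α (π α (s+1)))
      + ∑ s ∈ Finset.Icc 1 (m α), ((g α s).val : ℤ) * dz p m x α s + ((g₀ α).val : ℤ)) := by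
    refine Finset.sum_congr rfl fun α hα => ?_
    rw [Finset.mem_compl, Finset.mem_singleton] at hα
    have hq : ∀ s ∈ Finset.Ico 1 (m α),
        dz p m x' α (π α s) * dz p m x' α (π α (s+1))
        = dz p m x α (π α s) * dz p m x α (π α (s+1)) := by
      intro s hs
      rw [Finset.mem_Ico] at hs
      have hb1 : π α s ∈ Finset.Icc 1 (m α) := hπ α s (Finset.mem_Icc.mpr ⟨hs.1, by omega⟩)
      have hb2 : π α (s+1) ∈ Finset.Icc 1 (m α) :=
        hπ α (s+1) (Finset.mem_Icc.mpr ⟨by omega, by omega⟩)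
      rw [hd α _ (Finset.mem_Icc.mp hb1).1 (Finset.mem_Icc.mp hb1).2 (Or.inl hα),
        hd α _ (Finset.mem_Icc.mp hb2).1 (Finset.mem_Icc.mp hb2).2 (Or.inl hα)]
    have hl : ∀ s ∈ Finset.Icc 1 (m α),
        ((g α s).val : ℤ) * dz p m x' α s = ((g α s).val : ℤ) * dz p m x α s := by
      intro s hs
      rw [hd α s (Finset.mem_Icc.mp hs).1 (Finset.mem_Icc.mp hs).2 (Or.inl hα)]
    rw [Finset.sum_congr rfl hq, Finset.sum_congr rfl hl]
  rw [hcompl, Finset.sum_singleton, Finset.sum_singleton]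
  have h1 : ∑ s ∈ Finset.Ico 1 (m A), dz p m x' A (π A s) * dz p m x' A (π A (s+1))
      = ∑ s ∈ Finset.Ico 1 (m A), dz p m x A (π A s) * dz p m x A (π A (s+1))
      + (c : ℤ) * ((if 3 ≤ T then dz p m x A (π A (T-2)) else 0) + dz p m x A (π A T)) := by
    linarith [hquad]
  have h2 : ∑ s ∈ Finset.Icc 1 (m A), ((g A s).val : ℤ) * dz p m x' A s
      = ∑ s ∈ Finset.Icc 1 (m A), ((g A s).val : ℤ) * dz p m x A s
      + (c : ℤ) * ((g A r).val : ℤ) := by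
    linarith [hlin]
  rw [h1, h2]
  ring

set_option maxHeartbeats 2000000 in
lemma sumS_zero (hp : ∀ α, 0 < p α) (hm : ∀ α, 1 ≤ m α) (hk : 1 ≤ k)
    (lam : ℕ) (hlam : 0 < lam) (hpl : ∀ α, p α ∣ lam)
    (π : Fin k → Equiv.Perm ℕ)
    (hπ : ∀ α, ∀ i ∈ Finset.Icc 1 (m α), (π α) i ∈ Finset.Icc 1 (m α))
    (g : Fin k → ℕ → ZMod lam) (g₀ : Fin k → ZMod lam)
    (τ : ℕ) (hτ0 : 0 < τ) (hτL : τ < Lv p m) :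
    ∑ i ∈ (Finset.range (Lv p m - τ)).filter
        (fun i => ∀ α, dnn p m i α (π α 1) = dnn p m (i+τ) α (π α 1)),
      EE lam (FZ p m lam π g g₀ i - FZ p m lam π g g₀ (i+τ)) = 0 := by
  classical
  set S := (Finset.range (Lv p m - τ)).filter
      (fun i => ∀ α, dnn p m i α (π α 1) = dnn p m (i+τ) α (π α 1)) with hS
  set F : ℕ → ℂ := fun i => EE lam (FZ p m lam π g g₀ i - FZ p m lam π g g₀ (i+τ)) with hF
  rw [← Finset.sum_fiberwise_of_maps_to
    (g := keyf p m π hk τ) (t := S.image (keyf p m π hk τ))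
    (fun i hi => Finset.mem_image_of_mem _ hi) F]
  refine Finset.sum_eq_zero fun y hy => ?_
  obtain ⟨i₀, hi₀S, hkey⟩ := Finset.mem_image.mp hy
  have hi₀S' := hi₀S
  rw [hS, Finset.mem_filter, Finset.mem_range] at hi₀S'
  obtain ⟨hi₀r, H1⟩ := hi₀S'
  have hij : i₀ + τ < Lv p m := by omega
  obtain ⟨hcomplow, hcompA, hT2, hTm, hdT, hlow⟩ :=
    sel_spec p m hp hm hk π hπ τ i₀ hτ0 hij H1
  set A := Asel p m hk τ i₀ with hA
  set T := Tsel p m π hk τ i₀ with hT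
  set r := π A (T-1) with hr
  have hrIcc : r ∈ Finset.Icc 1 (m A) := hπ A (T-1) (Finset.mem_Icc.mpr ⟨by omega, by omega⟩)
  have hr1 : 1 ≤ r := (Finset.mem_Icc.mp hrIcc).1
  have hrm : r ≤ m A := (Finset.mem_Icc.mp hrIcc).2
  set e := een p m A r with he
  set u := dnn p m i₀ A r with hu
  set y0 := i₀ - u * e with hy0
  have hkey0 : keyf p m π hk τ i₀ = (y0, A, T) := by
    rw [keyf, ← hA, ← hT, ← hr, ← he, ← hu, ← hy0]
  have hyval : y = (y0, A, T) := by rw [← hkey, hkey0]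
  have hue : u * e ≤ i₀ := dnn_mul_een_le p m i₀ A r
  -- the fiber is the image of `range (p A)`
  have hfib : S.filter (fun i => keyf p m π hk τ i = y)
      = (Finset.range (p A)).image (fun c => y0 + c * e) := by
    ext x
    rw [Finset.mem_filter, Finset.mem_image]
    constructor
    · rintro ⟨hxS, hxkey⟩
      refine ⟨dnn p m x A r, Finset.mem_range.mpr (dnn_lt p m hp x A r), ?_⟩
      rw [hyval, keyf, Prod.ext_iff, Prod.ext_iff] at hxkey
      obtain ⟨h1, h2, h3⟩ := hxkey
      simp only at h1 h2 h3
      rw [h2, h3, ← hr, ← he] at h1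
      have hle : dnn p m x A r * e ≤ x := dnn_mul_een_le p m x A r
      omega
    · rintro ⟨c, hc, rfl⟩
      rw [Finset.mem_range] at hc
      obtain ⟨hicL, hicj, hSc, hkeyc⟩ :=
        fiber_invar p m hp hm hk π hπ τ i₀ hτ0 hij H1 c hc
      rw [← hA, ← hT, ← hr] at hicL hicj hSc hkeyc
      have hmdf : mdf p m i₀ A r c = y0 + c * e := by
        rw [mdf_eq, ← hu, ← he, hy0]
      rw [hmdf] at hicL hicj hSc hkeyc
      constructor
      · rw [hS, Finset.mem_filter, Finset.mem_range]
        exact ⟨by omega, hSc⟩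
      · rw [hkeyc, hkey]
  rw [hfib]
  have hinj2 : ∀ c1 ∈ Finset.range (p A), ∀ c2 ∈ Finset.range (p A),
      y0 + c1 * e = y0 + c2 * e → c1 = c2 := by
    intro c1 _ c2 _ hh
    have hepos : 0 < e := een_pos p m hp A r
    have : c1 * e = c2 * e := by omega
    exact Nat.eq_of_mul_eq_mul_right hepos this
  rw [Finset.sum_image hinj2]
  -- facts about y0 and y0 + τ
  have hy0m : y0 = mdf p m i₀ A r 0 := by rw [mdf_eq, ← hu, ← he, hy0]; omega
  obtain ⟨h0L, h0j, h0S, h0key⟩ := fiber_invar p m hp hm hk π hπ τ i₀ hτ0 hij H1 0 (hp A)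
  rw [← hA, ← hT, ← hr, ← hy0m] at h0L h0j h0S h0key
  have hy0L : y0 < Lv p m := by omega
  have hyτL : y0 + τ < Lv p m := h0L
  have hy00 : dnn p m y0 A r = 0 := by rw [hy0m]; exact mdf_digit p m hp i₀ A r 0 (hp A)
  have hyτ0 : dnn p m (y0 + τ) A r = 0 := by
    rw [h0j]; exact mdf_digit p m hp (i₀+τ) A r 0 (hp A)
  -- digits of y0 / y0+τ at positions ≠ r agree with i₀ / i₀+τ
  have hdy0 : ∀ s, 1 ≤ s → s ≤ m A → s ≠ r → dnn p m y0 A s = dnn p m i₀ A s := by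
    intro s h1 h2 h3
    rw [hy0m]
    exact mdf_other p m hp i₀ A r 0 hr1 hrm (hp A) A s h1 h2 (Or.inr h3)
  have hdyτ : ∀ s, 1 ≤ s → s ≤ m A → s ≠ r → dnn p m (y0+τ) A s = dnn p m (i₀+τ) A s := by
    intro s h1 h2 h3
    rw [h0j]
    exact mdf_other p m hp (i₀+τ) A r 0 hr1 hrm (hp A) A s h1 h2 (Or.inr h3)
  have hinjπ : ∀ s t : ℕ, π A s = π A t ↔ s = t := fun s t =>
    ⟨fun h => (π A).injective h, fun h => by rw [h]⟩
  have hπTr : π A T ≠ r := by rw [hr, Ne, hinjπ]; omega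
  have hπTIcc : π A T ∈ Finset.Icc 1 (m A) := hπ A T (Finset.mem_Icc.mpr ⟨by omega, hTm⟩)
  -- the two affine slopes
  set K1 : ℤ := ((lam / p A : ℕ) : ℤ) *
      ((if 3 ≤ T then dz p m y0 A (π A (T-2)) else 0) + dz p m y0 A (π A T))
    + ((g A r).val : ℤ) with hK1
  set K2 : ℤ := ((lam / p A : ℕ) : ℤ) *
      ((if 3 ≤ T then dz p m (y0+τ) A (π A (T-2)) else 0) + dz p m (y0+τ) A (π A T))
    + ((g A r).val : ℤ) with hK2
  set D : ℤ := dz p m y0 A (π A T) - dz p m (y0+τ) A (π A T) with hD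
  have hKD : K1 - K2 = ((lam / p A : ℕ) : ℤ) * D := by
    rw [hK1, hK2, hD]
    have hifeq : (if 3 ≤ T then dz p m y0 A (π A (T-2)) else 0)
        = (if 3 ≤ T then dz p m (y0+τ) A (π A (T-2)) else 0) := by
      rcases lt_or_ge T 3 with h3 | h3
      · rw [if_neg (by omega), if_neg (by omega)]
      · rw [if_pos h3, if_pos h3]
        have hπT2r : π A (T-2) ≠ r := by rw [hr, Ne, hinjπ]; omega
        have hπT2Icc : π A (T-2) ∈ Finset.Icc 1 (m A) :=
          hπ A (T-2) (Finset.mem_Icc.mpr ⟨by omega, by omega⟩)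
        rw [dz, dz, hdy0 _ (Finset.mem_Icc.mp hπT2Icc).1 (Finset.mem_Icc.mp hπT2Icc).2 hπT2r,
          hdyτ _ (Finset.mem_Icc.mp hπT2Icc).1 (Finset.mem_Icc.mp hπT2Icc).2 hπT2r]
        congr 1
        exact hlow (T-2) (by omega) (by omega)
    rw [hifeq]
    ring
  -- D is nonzero mod p A
  have hDval : D = (dnn p m i₀ A (π A T) : ℤ) - (dnn p m (i₀+τ) A (π A T) : ℤ) := by
    rw [hD, dz, dz, hdy0 _ (Finset.mem_Icc.mp hπTIcc).1 (Finset.mem_Icc.mp hπTIcc).2 hπTr,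
      hdyτ _ (Finset.mem_Icc.mp hπTIcc).1 (Finset.mem_Icc.mp hπTIcc).2 hπTr]
  have hDndvd : ¬ ((p A : ℤ) ∣ D) := by
    intro hdvd
    have h1 : dnn p m i₀ A (π A T) < p A := dnn_lt p m hp i₀ A (π A T)
    have h2 : dnn p m (i₀+τ) A (π A T) < p A := dnn_lt p m hp (i₀+τ) A (π A T)
    have h3 : p A ∣ D.natAbs := by
      have := Int.natAbs_dvd_natAbs.mpr hdvd
      simpa using this
    have h4 : D.natAbs < p A := by rw [hDval]; omega
    have h5 : D.natAbs = 0 := Nat.eq_zero_of_dvd_of_lt h3 h4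
    have h6 : D = 0 := Int.natAbs_eq_zero.mp h5
    rw [hDval] at h6
    omega
  -- each fiber term via FZ_affine
  have haff : ∀ c < p A, F (y0 + c * e)
      = EE lam ((FZ p m lam π g g₀ y0 - FZ p m lam π g g₀ (y0+τ)) + (K1 - K2) * c) := by
    intro c hc
    have e1 : FZ p m lam π g g₀ (y0 + c * e) = FZ p m lam π g g₀ y0 + c * K1 := by
      rw [he, hr]
      exact FZ_affine p m hp hm lam π hπ g g₀ A T hT2 hTm y0 hy0L (by rw [← hr]; exact hy00) c hc
    have e2 : FZ p m lam π g g₀ (y0 + τ + c * e) = FZ p m lam π g g₀ (y0+τ) + c * K2 := by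
      rw [he, hr]
      exact FZ_affine p m hp hm lam π hπ g g₀ A T hT2 hTm (y0+τ) hyτL (by rw [← hr]; exact hyτ0) c hc
    have e3 : y0 + c * e + τ = y0 + τ + c * e := by omega
    rw [hF]
    simp only
    rw [e3, e1, e2]
    congr 1
    ring
  have hsum : ∑ c ∈ Finset.range (p A), F (y0 + c * e)
      = EE lam (FZ p m lam π g g₀ y0 - FZ p m lam π g g₀ (y0+τ))
        * ∑ c ∈ Finset.range (p A), EE lam ((K1 - K2) * c) := by
    rw [Finset.mul_sum]
    refine Finset.sum_congr rfl fun c hc => ?_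
    rw [haff c (Finset.mem_range.mp hc), EE_add]
  rw [hsum, hKD]
  have hgeo : ∑ c ∈ Finset.range (p A), EE lam ((((lam / p A : ℕ) : ℤ) * D) * c) = 0 := by
    refine EE_geom_zero lam (by omega) _ (p A) ?_ ?_
    · have hnat : (lam / p A) * p A = lam := Nat.div_mul_cancel (hpl A)
      have hnatZ : ((lam / p A : ℕ) : ℤ) * (p A : ℤ) = (lam : ℤ) := by exact_mod_cast hnat
      have : ((lam / p A : ℕ) : ℤ) * D * (p A) = (lam : ℤ) * D := by
        rw [mul_right_comm, hnatZ]
      rw [this]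
      exact Dvd.intro D rfl
    · intro hdvd
      apply hDndvd
      have hnat : (lam / p A) * p A = lam := Nat.div_mul_cancel (hpl A)
      have hc0 : 0 < lam / p A := Nat.div_pos (Nat.le_of_dvd hlam (hpl A)) (hp A)
      have hlameq : (lam : ℤ) = ((lam / p A : ℕ) : ℤ) * (p A : ℤ) := by exact_mod_cast hnat.symm
      rw [hlameq] at hdvd
      have := (mul_dvd_mul_iff_left (a := ((lam / p A : ℕ) : ℤ))
        (by exact_mod_cast hc0.ne')).mp hdvd
      exact this
  rw [hgeo, mul_zero]

lemma digv_val (hp : ∀ α, 0 < p α) (hm : ∀ α, 1 ≤ m α) (i : ℕ) (α : Fin k) (t : ℕ)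
    (ht : t ≤ m α) : (digv p m i α t).val = dnn p m i α t := by
  have h := dnn_eq_nested p m hp hm i α t ht
  simp only [digv, Qv] at h ⊢
  rw [h]
  exact ZMod.val_natCast_of_lt (dnn_lt p m hp i α t)

lemma cast_big (hp0 : ∀ α, 0 < p α) (hm : ∀ α, 1 ≤ m α)
    (lam : ℕ) [NeZero lam] (π : Fin k → Equiv.Perm ℕ)
    (hπ : ∀ α, ∀ i ∈ Finset.Icc 1 (m α), (π α) i ∈ Finset.Icc 1 (m α))
    (g : Fin k → ℕ → ZMod lam) (g₀ : Fin k → ZMod lam)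
    (γ : (α : Fin k) → ℕ) (i : ℕ) :
    ((∑ α, (((lam / p α : ℕ) : ZMod lam) *
        (∑ s ∈ Finset.Ico 1 (m α),
          (((digv p m i α) ((π α) s)).val : ZMod lam) *
          (((digv p m i α) ((π α) (s+1))).val : ZMod lam))
      + ∑ s ∈ Finset.Icc 1 (m α), g α s * (((digv p m i α) s).val : ZMod lam) + g₀ α))
      + ∑ α, ((lam / p α : ℕ) : ZMod lam) *
          (((digv p m i α) ((π α) 1)).val : ZMod lam) * ((γ α : ℕ) : ZMod lam))
    = (((FZ p m lam π g g₀ i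
        + ∑ α, ((lam / p α : ℕ) : ℤ) * dz p m i α (π α 1) * ((γ α : ℕ) : ℤ)) : ℤ)
        : ZMod lam) := by
  have hv : ∀ (α : Fin k) (t : ℕ), t ≤ m α →
      (((digv p m i α) t).val : ZMod lam) = ((dnn p m i α t : ℕ) : ZMod lam) := by
    intro α t ht
    rw [digv_val p m hp0 hm i α t ht]
  rw [FZ]
  simp only [dz, Int.cast_add, Int.cast_mul, Int.cast_sum, Int.cast_natCast,
    ZMod.natCast_val, ZMod.cast_id, ZMod.cast_id']
  refine congrArg₂ HAdd.hAdd (Finset.sum_congr rfl fun α _ => ?_)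
    (Finset.sum_congr rfl fun α _ => ?_)
  · refine congrArg₂ HAdd.hAdd (congrArg₂ HAdd.hAdd ?_ ?_) (by simp [ZMod.natCast_val])
    · refine congrArg₂ HMul.hMul rfl (Finset.sum_congr rfl fun s hs => ?_)
      rw [Finset.mem_Ico] at hs
      have hb1 := hπ α s (Finset.mem_Icc.mpr ⟨hs.1, by omega⟩)
      have hb2 := hπ α (s+1) (Finset.mem_Icc.mpr ⟨by omega, by omega⟩)
      rw [hv α _ (Finset.mem_Icc.mp hb1).2, hv α _ (Finset.mem_Icc.mp hb2).2]
    · refine Finset.sum_congr rfl fun s hs => ?_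
      rw [hv α s (Finset.mem_Icc.mp hs).2]
      simp [ZMod.natCast_val]
  · have hb1 := hπ α 1 (Finset.mem_Icc.mpr ⟨le_rfl, hm α⟩)
    rw [hv α _ (Finset.mem_Icc.mp hb1).2]

end ctx

set_option maxHeartbeats 1000000 in
theorem stmt3 (k lam : ℕ) (hk : 1 ≤ k)
    (p m : Fin k → ℕ)
    (hp : ∀ α, (p α).Prime) (hm : ∀ α, 1 ≤ m α)
    (hlam : 0 < lam) (hpl : ∀ α, p α ∣ lam)
    (π : Fin k → Equiv.Perm ℕ)
    (hπ : ∀ α, ∀ i ∈ Finset.Icc 1 (m α), (π α) i ∈ Finset.Icc 1 (m α))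
    (g : Fin k → ℕ → ZMod lam) (g₀ : Fin k → ZMod lam)
    (f : (α : Fin k) → (ℕ → ZMod (p α)) → ZMod lam)
    (hf : ∀ (α : Fin k) (v : ℕ → ZMod (p α)),
      f α v = ((lam / p α : ℕ) : ZMod lam) *
            (∑ i ∈ Finset.Ico 1 (m α),
              ((v ((π α) i)).val : ZMod lam) * ((v ((π α) (i + 1))).val : ZMod lam))
        + ∑ i ∈ Finset.Icc 1 (m α), g α i * ((v i).val : ZMod lam) + g₀ α)
    (a : ((α : Fin k) → ℕ) → ((α : Fin k) → (ℕ → ZMod (p α))) → ZMod lam)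
    (ha : ∀ (γ : (α : Fin k) → ℕ) (v : (α : Fin k) → (ℕ → ZMod (p α))),
      a γ v = (∑ α, f α (v α))
        + ∑ α, ((lam / p α : ℕ) : ZMod lam) *
            ((v α ((π α) 1)).val : ZMod lam) * ((γ α : ℕ) : ZMod lam))
    (τ : ℕ) (hτ0 : 0 < τ) (hτL : τ < ∏ α, p α ^ m α) :
    ∑ γ ∈ Fintype.piFinset (fun α => Finset.range (p α)),
      aacf (∏ α, p α ^ m α) (fun i => eZMod lam (a γ (digv p m i))) τ = 0 := by
  classical
  haveI : NeZero lam := ⟨by omega⟩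
  have hp0 : ∀ α, 0 < p α := fun α => (hp α).pos
  have hτL' : τ < Lv p m := hτL
  set W : ℕ → ℤ := FZ p m lam π g g₀ with hW
  set cc : ℕ → Fin k → ℤ := fun i α => ((lam / p α : ℕ) : ℤ) *
      (dz p m i α (π α 1) - dz p m (i+τ) α (π α 1)) with hcc
  have hcast : ∀ (γ : (α : Fin k) → ℕ) (j : ℕ), a γ (digv p m j)
      = (((W j + ∑ α, ((lam / p α : ℕ) : ℤ) * dz p m j α (π α 1) * ((γ α : ℕ) : ℤ)) : ℤ)
        : ZMod lam) := by
    intro γ j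
    rw [ha]
    simp only [hf]
    exact cast_big p m hp0 hm lam π hπ g g₀ γ j
  show ∑ γ ∈ Fintype.piFinset (fun α => Finset.range (p α)),
      aacf (Lv p m) (fun i => eZMod lam (a γ (digv p m i))) τ = 0
  simp only [aacf]
  rw [Finset.sum_comm]
  have hstep : ∀ i ∈ Finset.range (Lv p m - τ),
      (∑ γ ∈ Fintype.piFinset (fun α => Finset.range (p α)),
        eZMod lam (a γ (digv p m i)) *
          (starRingEnd ℂ) (eZMod lam (a γ (digv p m (i+τ)))))
      = EE lam (W i - W (i+τ)) *
          ∏ α, ∑ n ∈ Finset.range (p α), EE lam (cc i α * n) := by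
    intro i _
    have hterm : ∀ γ ∈ Fintype.piFinset (fun α => Finset.range (p α)),
        eZMod lam (a γ (digv p m i)) *
          (starRingEnd ℂ) (eZMod lam (a γ (digv p m (i+τ))))
        = EE lam (W i - W (i+τ)) * ∏ α, EE lam (cc i α * (γ α)) := by
      intro γ _
      rw [hcast γ i, hcast γ (i+τ), eZMod_eq_EE lam (by omega) _,
        eZMod_eq_EE lam (by omega) _, EE_conj, ← EE_add]
      have hs : (∑ α, ((lam / p α : ℕ) : ℤ) * dz p m i α (π α 1) * ((γ α : ℕ) : ℤ))
          - (∑ α, ((lam / p α : ℕ) : ℤ) * dz p m (i+τ) α (π α 1) * ((γ α : ℕ) : ℤ))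
          = ∑ α, cc i α * (γ α) := by
        rw [← Finset.sum_sub_distrib]
        refine Finset.sum_congr rfl fun α _ => ?_
        rw [hcc]
        ring
      have hexp : (W i + ∑ α, ((lam / p α : ℕ) : ℤ) * dz p m i α (π α 1) * ((γ α : ℕ) : ℤ))
          + -(W (i+τ) + ∑ α, ((lam / p α : ℕ) : ℤ) * dz p m (i+τ) α (π α 1) * ((γ α : ℕ) : ℤ))
          = (W i - W (i+τ)) + ∑ α, cc i α * (γ α) := by
        rw [← hs]
        ring
      rw [hexp, EE_add, EE_sum lam Finset.univ (fun α => cc i α * (γ α))]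
    rw [Finset.sum_congr rfl hterm, ← Finset.mul_sum]
    congr 1
    exact (Finset.prod_univ_sum (fun α => Finset.range (p α))
      (fun α n => EE lam (cc i α * n))).symm
  rw [Finset.sum_congr rfl hstep]
  set PP : ℂ := ∏ α, (p α : ℂ) with hPP
  have hsplit : ∀ i ∈ Finset.range (Lv p m - τ),
      EE lam (W i - W (i+τ)) * ∏ α, ∑ n ∈ Finset.range (p α), EE lam (cc i α * n)
      = if (∀ α, dnn p m i α (π α 1) = dnn p m (i+τ) α (π α 1))
        then EE lam (W i - W (i+τ)) * PP else 0 := by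
    intro i _
    by_cases hcond : ∀ α, dnn p m i α (π α 1) = dnn p m (i+τ) α (π α 1)
    · rw [if_pos hcond]
      congr 1
      rw [hPP]
      refine Finset.prod_congr rfl fun α _ => ?_
      have hc0 : cc i α = 0 := by
        rw [hcc]
        simp [dz, hcond α]
      rw [hc0]
      simp only [zero_mul, EE_zero]
      rw [Finset.sum_const, Finset.card_range, nsmul_eq_mul, mul_one]
    · rw [if_neg hcond]
      push_neg at hcond
      obtain ⟨α₀, hα₀⟩ := hcond
      refine mul_eq_zero_of_right _ ?_
      refine Finset.prod_eq_zero (Finset.mem_univ α₀) ?_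
      have hnat : (lam / p α₀) * p α₀ = lam := Nat.div_mul_cancel (hpl α₀)
      have hnatZ : ((lam / p α₀ : ℕ) : ℤ) * (p α₀ : ℤ) = (lam : ℤ) := by exact_mod_cast hnat
      refine EE_geom_zero lam (by omega) _ (p α₀) ?_ ?_
      · have : cc i α₀ * (p α₀) = (lam : ℤ) * (dz p m i α₀ (π α₀ 1) - dz p m (i+τ) α₀ (π α₀ 1)) := by
          rw [hcc, mul_right_comm, hnatZ]
        rw [this]
        exact Dvd.intro _ rfl
      · intro hdvd
        set D : ℤ := dz p m i α₀ (π α₀ 1) - dz p m (i+τ) α₀ (π α₀ 1) with hD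
        have hc0 : 0 < lam / p α₀ := Nat.div_pos (Nat.le_of_dvd hlam (hpl α₀)) (hp0 α₀)
        have hlameq : (lam : ℤ) = ((lam / p α₀ : ℕ) : ℤ) * (p α₀ : ℤ) := hnatZ.symm
        rw [hcc] at hdvd
        simp only at hdvd
        rw [hlameq] at hdvd
        have hpD : (p α₀ : ℤ) ∣ D :=
          (mul_dvd_mul_iff_left (a := ((lam / p α₀ : ℕ) : ℤ))
            (by exact_mod_cast hc0.ne')).mp hdvd
        have h1 : dnn p m i α₀ (π α₀ 1) < p α₀ := dnn_lt p m hp0 i α₀ (π α₀ 1)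
        have h2 : dnn p m (i+τ) α₀ (π α₀ 1) < p α₀ := dnn_lt p m hp0 (i+τ) α₀ (π α₀ 1)
        have h3 : p α₀ ∣ D.natAbs := by
          have := Int.natAbs_dvd_natAbs.mpr hpD
          simpa using this
        have h4 : D.natAbs < p α₀ := by rw [hD, dz, dz]; omega
        have h5 : D.natAbs = 0 := Nat.eq_zero_of_dvd_of_lt h3 h4
        have h6 : D = 0 := Int.natAbs_eq_zero.mp h5
        rw [hD, dz, dz] at h6
        apply hα₀
        omega
  rw [Finset.sum_congr rfl hsplit, ← Finset.sum_filter, ← Finset.sum_mul,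
    sumS_zero p m hp0 hm hk lam hlam hpl π hπ g g₀ τ hτ0 hτL', zero_mul]
end
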